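/- arXiv:2602.15800 — 6 statements merged into one kernel-verified Lean document; each statement's English description precedes it below -/
import Mathlib

section
/- Let X be a diagonally symmetric matrix on (ℂ^d)^{⊗n} with diagonal tensor Q[X]_i = ⟨i|X|i⟩. For any subset A ⊆ [n], the partial trace Tr_A(X) is again diagonally symmetric (on n−|A| systems), and its diagonal tensor equals the classical marginal of Q[X]: Q[Tr_A(X)]_j = Σ_{i ∈ [d]^{|A|}} Q[X]_{j ⊔ i}. -/
open ComplexOrder

/-- The permutation operator `P_σ` on `(ℂ^d)^{⊗ι}`, sending `|i⟩` to `|i ∘ σ⁻¹⟩`. -/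
def permMatrix (ι : Type) [Fintype ι] [DecidableEq ι] (d : ℕ) (σ : Equiv.Perm ι) :
    Matrix (ι → Fin d) (ι → Fin d) ℂ :=
  Matrix.of fun a b => if a = (fun k => b (σ⁻¹ k)) then 1 else 0

/-- The orthogonal projection `Π = (1/n!) ∑_σ P_σ` onto the symmetric subspace. -/
noncomputable def symProj (ι : Type) [Fintype ι] [DecidableEq ι] (d : ℕ) :
    Matrix (ι → Fin d) (ι → Fin d) ℂ :=
  ((Nat.factorial (Fintype.card ι) : ℂ))⁻¹ • ∑ σ : Equiv.Perm ι, permMatrix ι d σ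

/-- A matrix is diagonally symmetric if it is supported on the symmetric subspace
(`Π X Π = X`) and commutes with `U^{⊗n}` for every diagonal unitary `U`. -/
def IsDS (ι : Type) [Fintype ι] [DecidableEq ι] (d : ℕ)
    (X : Matrix (ι → Fin d) (ι → Fin d) ℂ) : Prop :=
  symProj ι d * X * symProj ι d = X ∧
  ∀ θ : Fin d → ℝ,
    Matrix.diagonal (fun i : ι → Fin d => ∏ k, Complex.exp ((θ (i k) : ℂ) * Complex.I)) * X =
      X * Matrix.diagonal fun i : ι → Fin d => ∏ k, Complex.exp ((θ (i k) : ℂ) * Complex.I)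

/-- Merge an assignment on the complement of `A` with an assignment on `A` into a full
multi-index. -/
def merge {n d : ℕ} (A : Finset (Fin n)) (j : {k : Fin n // k ∉ A} → Fin d)
    (i : {k : Fin n // k ∈ A} → Fin d) : Fin n → Fin d :=
  fun k => if h : k ∈ A then i ⟨k, h⟩ else j ⟨k, h⟩

lemma perm_mul_apply {ι : Type} [Fintype ι] [DecidableEq ι] {d : ℕ} (σ : Equiv.Perm ι)
    (X : Matrix (ι → Fin d) (ι → Fin d) ℂ) (a b : ι → Fin d) :
    (permMatrix ι d σ * X) a b = X (fun k => a (σ k)) b := by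
  have key : ∀ c : ι → Fin d, (a = fun k => c (σ⁻¹ k)) ↔ (c = fun k => a (σ k)) := by
    intro c
    constructor
    · rintro rfl; funext k; simp
    · rintro rfl; funext k; simp
  simp only [permMatrix, Matrix.mul_apply, Matrix.of_apply, key, ite_mul, one_mul, zero_mul]
  simp [Finset.sum_ite_eq']

lemma mul_perm_apply {ι : Type} [Fintype ι] [DecidableEq ι] {d : ℕ} (σ : Equiv.Perm ι)
    (X : Matrix (ι → Fin d) (ι → Fin d) ℂ) (a b : ι → Fin d) :
    (X * permMatrix ι d σ) a b = X a (fun k => b (σ⁻¹ k)) := by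
  simp only [permMatrix, Matrix.mul_apply, Matrix.of_apply, mul_ite, mul_one, mul_zero]
  simp [Finset.sum_ite_eq']

lemma permMatrix_mul_permMatrix {ι : Type} [Fintype ι] [DecidableEq ι] {d : ℕ}
    (σ τ : Equiv.Perm ι) :
    permMatrix ι d σ * permMatrix ι d τ = permMatrix ι d (σ * τ) := by
  ext a b
  rw [perm_mul_apply]
  simp only [permMatrix, Matrix.of_apply]
  congr 1
  apply propext
  constructor
  · intro h; funext k
    have := congrFun h (σ⁻¹ k)
    simpa using this
  · intro h; funext k
    rw [h]
    simp [Equiv.Perm.mul_apply]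

lemma perm_mul_symProj {ι : Type} [Fintype ι] [DecidableEq ι] {d : ℕ} (σ : Equiv.Perm ι) :
    permMatrix ι d σ * symProj ι d = symProj ι d := by
  unfold symProj
  rw [Matrix.mul_smul, Finset.mul_sum]
  congr 1
  simp_rw [permMatrix_mul_permMatrix]
  exact Fintype.sum_equiv (Equiv.mulLeft σ) _ _ (fun τ => rfl)

lemma symProj_mul_perm {ι : Type} [Fintype ι] [DecidableEq ι] {d : ℕ} (σ : Equiv.Perm ι) :
    symProj ι d * permMatrix ι d σ = symProj ι d := by
  unfold symProj
  rw [Matrix.smul_mul, Finset.sum_mul]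
  congr 1
  simp_rw [permMatrix_mul_permMatrix]
  exact Fintype.sum_equiv (Equiv.mulRight σ) _ _ (fun τ => rfl)

lemma left_inv_of_proj {ι : Type} [Fintype ι] [DecidableEq ι] {d : ℕ}
    {X : Matrix (ι → Fin d) (ι → Fin d) ℂ} (h : symProj ι d * X * symProj ι d = X)
    (σ : Equiv.Perm ι) (a b : ι → Fin d) :
    X (fun k => a (σ k)) b = X a b := by
  rw [← perm_mul_apply σ X a b]
  conv_lhs => rw [← h]
  rw [← Matrix.mul_assoc, ← Matrix.mul_assoc, perm_mul_symProj, h]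

lemma right_inv_of_proj {ι : Type} [Fintype ι] [DecidableEq ι] {d : ℕ}
    {X : Matrix (ι → Fin d) (ι → Fin d) ℂ} (h : symProj ι d * X * symProj ι d = X)
    (σ : Equiv.Perm ι) (a b : ι → Fin d) :
    X a (fun k => b (σ k)) = X a b := by
  have := mul_perm_apply σ⁻¹ X a b
  simp only [inv_inv] at this
  rw [← this]
  conv_lhs => rw [← h]
  rw [Matrix.mul_assoc, symProj_mul_perm, h]

/-- the partial trace over a subset `A` of systems of a diagonally symmetric
matrix is again diagonally symmetric, and its diagonal tensor is the classical marginal of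
the diagonal tensor of `X`. -/
theorem stmt_8 (n d : ℕ) (X : Matrix (Fin n → Fin d) (Fin n → Fin d) ℂ)
    (hX : IsDS (Fin n) d X) (A : Finset (Fin n)) :
    IsDS {k : Fin n // k ∉ A} d
        (Matrix.of fun j j' : {k : Fin n // k ∉ A} → Fin d =>
          ∑ i : {k : Fin n // k ∈ A} → Fin d, X (merge A j i) (merge A j' i)) ∧
      ∀ j : {k : Fin n // k ∉ A} → Fin d,
        (Matrix.of fun j j' : {k : Fin n // k ∉ A} → Fin d =>
            ∑ i : {k : Fin n // k ∈ A} → Fin d, X (merge A j i) (merge A j' i)) j j =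
          ∑ i : {k : Fin n // k ∈ A} → Fin d, X (merge A j i) (merge A j i) := by
  obtain ⟨hproj, hphase⟩ := hX
  set Y : Matrix ({k : Fin n // k ∉ A} → Fin d) ({k : Fin n // k ∉ A} → Fin d) ℂ :=
    Matrix.of fun j j' : {k : Fin n // k ∉ A} → Fin d =>
      ∑ i : {k : Fin n // k ∈ A} → Fin d, X (merge A j i) (merge A j' i) with hY
  -- merge composed with an extended permutation
  have hmerge : ∀ (τ : Equiv.Perm {k : Fin n // k ∉ A}) (j : {k : Fin n // k ∉ A} → Fin d)
      (i : {k : Fin n // k ∈ A} → Fin d),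
      merge A (fun s => j (τ s)) i =
        fun k => merge A j i ((Equiv.Perm.subtypeCongr (1 : Equiv.Perm {k : Fin n // k ∈ A}) τ) k) := by
    intro τ j i
    funext k
    by_cases hk : k ∈ A
    · have h1 : (Equiv.Perm.subtypeCongr (1 : Equiv.Perm {k : Fin n // k ∈ A}) τ) k = k := by
        simp [Equiv.Perm.subtypeCongr.apply, hk]
      rw [h1]
      simp [merge, hk]
    · have h1 : (Equiv.Perm.subtypeCongr (1 : Equiv.Perm {k : Fin n // k ∈ A}) τ) k =
          (τ ⟨k, hk⟩ : {k : Fin n // k ∉ A}).val := by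
        simp [Equiv.Perm.subtypeCongr.apply, hk]
      rw [h1]
      simp only [merge]
      rw [dif_neg hk, dif_neg (τ ⟨k, hk⟩).property, Subtype.coe_eta]
  -- Y is invariant under permutations on both sides
  have hYl : ∀ (τ : Equiv.Perm {k : Fin n // k ∉ A}) (j j' : {k : Fin n // k ∉ A} → Fin d),
      Y (fun s => j (τ s)) j' = Y j j' := by
    intro τ j j'
    simp only [hY, Matrix.of_apply]
    refine Finset.sum_congr rfl fun i _ => ?_
    rw [hmerge τ j i]
    exact left_inv_of_proj hproj _ _ _
  have hYr : ∀ (τ : Equiv.Perm {k : Fin n // k ∉ A}) (j j' : {k : Fin n // k ∉ A} → Fin d),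
      Y j (fun s => j' (τ s)) = Y j j' := by
    intro τ j j'
    simp only [hY, Matrix.of_apply]
    refine Finset.sum_congr rfl fun i _ => ?_
    rw [hmerge τ j' i]
    exact right_inv_of_proj hproj _ _ _
  have hPY : ∀ τ : Equiv.Perm {k : Fin n // k ∉ A},
      permMatrix _ d τ * Y = Y := by
    intro τ; ext j j'; rw [perm_mul_apply]; exact hYl τ j j'
  have hYP : ∀ τ : Equiv.Perm {k : Fin n // k ∉ A},
      Y * permMatrix _ d τ = Y := by
    intro τ; ext j j'; rw [mul_perm_apply]; exact hYr τ⁻¹ j j'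
  have hcard : ((Nat.factorial (Fintype.card {k : Fin n // k ∉ A}) : ℂ)) ≠ 0 := by
    exact_mod_cast Nat.factorial_ne_zero _
  have hSY : symProj {k : Fin n // k ∉ A} d * Y = Y := by
    unfold symProj
    rw [Matrix.smul_mul, Finset.sum_mul]
    simp_rw [hPY]
    rw [Finset.sum_const, Finset.card_univ, Fintype.card_perm]
    rw [← Nat.cast_smul_eq_nsmul ℂ, smul_smul, inv_mul_cancel₀ hcard, one_smul]
  have hYS : Y * symProj {k : Fin n // k ∉ A} d = Y := by
    unfold symProj
    rw [Matrix.mul_smul, Finset.mul_sum]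
    simp_rw [hYP]
    rw [Finset.sum_const, Finset.card_univ, Fintype.card_perm]
    rw [← Nat.cast_smul_eq_nsmul ℂ, smul_smul, inv_mul_cancel₀ hcard, one_smul]
  refine ⟨⟨by rw [hSY, hYS], ?_⟩, fun j => rfl⟩
  -- phase commutation
  intro θ
  have hsplit : ∀ (j : {k : Fin n // k ∉ A} → Fin d) (i : {k : Fin n // k ∈ A} → Fin d),
      (∏ k, Complex.exp ((θ ((merge A j i) k) : ℂ) * Complex.I)) =
      (∏ s : {k : Fin n // k ∈ A}, Complex.exp ((θ (i s) : ℂ) * Complex.I)) *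
      (∏ s : {k : Fin n // k ∉ A}, Complex.exp ((θ (j s) : ℂ) * Complex.I)) := by
    intro j i
    rw [← Finset.prod_mul_prod_compl A
      (fun k => Complex.exp ((θ ((merge A j i) k) : ℂ) * Complex.I))]
    congr 1
    · rw [Finset.prod_subtype A (fun x => Iff.rfl)
        (fun k => Complex.exp ((θ ((merge A j i) k) : ℂ) * Complex.I))]
      refine Finset.prod_congr rfl fun s _ => ?_
      simp [merge, s.property]
    · rw [Finset.prod_subtype Aᶜ (fun x => Finset.mem_compl)
        (fun k => Complex.exp ((θ ((merge A j i) k) : ℂ) * Complex.I))]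
      refine Finset.prod_congr rfl fun s _ => ?_
      simp [merge, s.property]
  have hXp : ∀ a b, (∏ k, Complex.exp ((θ (a k) : ℂ) * Complex.I)) * X a b =
      X a b * ∏ k, Complex.exp ((θ (b k) : ℂ) * Complex.I) := by
    intro a b
    have := congrFun (congrFun (hphase θ) a) b
    simpa [Matrix.diagonal_mul, Matrix.mul_diagonal] using this
  ext j j'
  rw [Matrix.diagonal_mul, Matrix.mul_diagonal]
  simp only [hY, Matrix.of_apply, Finset.mul_sum, Finset.sum_mul]
  refine Finset.sum_congr rfl fun i _ => ?_
  have h1 := hXp (merge A j i) (merge A j' i)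
  rw [hsplit j i, hsplit j' i] at h1
  set c := ∏ s : {k : Fin n // k ∈ A}, Complex.exp ((θ (i s) : ℂ) * Complex.I) with hc
  have hc0 : c ≠ 0 := by
    rw [hc]
    exact Finset.prod_ne_zero_iff.mpr fun s _ => Complex.exp_ne_zero _
  apply mul_left_cancel₀ hc0
  calc c * ((∏ s : {k : Fin n // k ∉ A}, Complex.exp ((θ (j s) : ℂ) * Complex.I)) *
        X (merge A j i) (merge A j' i))
      = (c * (∏ s : {k : Fin n // k ∉ A}, Complex.exp ((θ (j s) : ℂ) * Complex.I))) *
        X (merge A j i) (merge A j' i) := by ring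
    _ = X (merge A j i) (merge A j' i) *
        (c * (∏ s : {k : Fin n // k ∉ A}, Complex.exp ((θ (j' s) : ℂ) * Complex.I))) := h1
    _ = c * (X (merge A j i) (merge A j' i) *
        (∏ s : {k : Fin n // k ∉ A}, Complex.exp ((θ (j' s) : ℂ) * Complex.I))) := by ring
end

section
/- A diagonally symmetric state X on two qudits (n = 2, local dimension d) is PPT if and only if its diagonal tensor Q[X], viewed as a d × d matrix Q_{ij} = ⟨ij|X|ij⟩, is doubly non-negative: entrywise non-negative and positive semidefinite. -/
open ComplexOrder

/-- The partial transpose over the tensor factors indexed by `I`. -/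
def ptranspose {n d : ℕ} (I : Finset (Fin n))
    (ρ : Matrix (Fin n → Fin d) (Fin n → Fin d) ℂ) :
    Matrix (Fin n → Fin d) (Fin n → Fin d) ℂ :=
  Matrix.of fun a b =>
    ρ (fun k => if k ∈ I then b k else a k) (fun k => if k ∈ I then a k else b k)

section Stmt11Aux
open Matrix

lemma psd_map_ofReal {n : Type} [Fintype n] [DecidableEq n] {A : Matrix n n ℝ}
    (h : A.PosSemidef) : (A.map Complex.ofReal).PosSemidef := by
  obtain ⟨B, hB⟩ : ∃ B : Matrix n n ℝ, A = Bᴴ * B := by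
    open scoped MatrixOrder in
    obtain ⟨B, rfl⟩ := CStarAlgebra.nonneg_iff_eq_star_mul_self.mp h.nonneg
    exact ⟨B, rfl⟩
  have h1 : (B.map Complex.ofReal)ᴴ = (Bᴴ).map Complex.ofReal := by
    ext i j; simp [Matrix.conjTranspose_apply, Complex.conj_ofReal, Complex.star_def]
  have h2 : A.map Complex.ofReal = (B.map Complex.ofReal)ᴴ * (B.map Complex.ofReal) := by
    rw [h1, hB]; ext i j
    simp only [Matrix.map_apply, Matrix.mul_apply]
    push_cast
    rfl
  rw [h2]; exact Matrix.posSemidef_conjTranspose_mul_self _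
lemma psd_of_map_ofReal {n : Type} [Fintype n] [DecidableEq n] {A : Matrix n n ℝ}
    (h : (A.map Complex.ofReal).PosSemidef) : A.PosSemidef := by
  refine Matrix.PosSemidef.of_dotProduct_mulVec_nonneg ?_ ?_
  · ext i j
    have := congrFun (congrFun h.1 i) j
    simp only [Matrix.conjTranspose_apply, Matrix.map_apply, Complex.star_def,
      Complex.conj_ofReal] at this
    simpa [Matrix.conjTranspose_apply] using Complex.ofReal_injective this
  · intro x
    have h2 := h.dotProduct_mulVec_nonneg (fun i => (x i : ℂ))
    have key : ((dotProduct (star x) (A.mulVec x) : ℝ) : ℂ) =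
        dotProduct (star (fun i => (x i : ℂ))) ((A.map Complex.ofReal).mulVec (fun i => (x i : ℂ))) := by
      simp only [dotProduct, Matrix.mulVec, Pi.star_apply, star_trivial,
        Matrix.map_apply, Complex.star_def, Complex.conj_ofReal]
      push_cast
      ring_nf
    rw [← key] at h2
    exact Complex.zero_le_real.mp h2

set_option linter.unreachableTactic false
set_option linter.unusedTactic false

variable {d : ℕ}


lemma permMatrix_mul (σ : Equiv.Perm (Fin 2)) (M : Matrix (Fin 2 → Fin d) (Fin 2 → Fin d) ℂ) :
    permMatrix (Fin 2) d σ * M = Matrix.of fun a b => M (fun k => a (σ k)) b := by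
  ext a b
  rw [Matrix.mul_apply]
  have hcond : ∀ c : Fin 2 → Fin d, (a = fun k => c (σ⁻¹ k)) ↔ c = fun k => a (σ k) := by
    intro c; constructor <;> intro h <;> funext k
    · rw [h]; simp
    · rw [h]; simp
  simp only [permMatrix, Matrix.of_apply, hcond, ite_mul, one_mul, zero_mul]
  simp [Finset.sum_ite_eq']

lemma mul_permMatrix (σ : Equiv.Perm (Fin 2)) (M : Matrix (Fin 2 → Fin d) (Fin 2 → Fin d) ℂ) :
    M * permMatrix (Fin 2) d σ = Matrix.of fun a b => M a (fun k => b (σ⁻¹ k)) := by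
  ext a b
  rw [Matrix.mul_apply]
  simp only [permMatrix, Matrix.of_apply, mul_ite, mul_one, mul_zero]
  simp [Finset.sum_ite_eq']

lemma permMatrix_one : permMatrix (Fin 2) d 1 = 1 := by
  ext a b
  simp [permMatrix, Matrix.one_apply]

lemma symProj_eq : symProj (Fin 2) d =
    (2:ℂ)⁻¹ • (1 + permMatrix (Fin 2) d (Equiv.swap 0 1)) := by
  rw [symProj, show (Finset.univ : Finset (Equiv.Perm (Fin 2))) = {1, Equiv.swap 0 1} by decide]
  rw [Finset.sum_pair (by decide), permMatrix_one]
  norm_num [Nat.factorial]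

lemma swap_sq : permMatrix (Fin 2) d (Equiv.swap 0 1) * permMatrix (Fin 2) d (Equiv.swap 0 1) = 1 := by
  rw [permMatrix_mul]
  ext a b
  have : ((fun k => a (Equiv.swap 0 1 k)) = fun k => b (Equiv.swap 0 1 k)) ↔ a = b := by
    constructor <;> intro h
    · funext k
      have := congrFun h (Equiv.swap 0 1 k)
      simpa [Equiv.swap_apply_self] using this
    · rw [h]
  simp [permMatrix, Matrix.one_apply, this]

lemma symProj_idem : symProj (Fin 2) d * symProj (Fin 2) d = symProj (Fin 2) d := by
  rw [symProj_eq]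
  rw [Matrix.smul_mul, Matrix.mul_smul, smul_smul]
  rw [add_mul, mul_add, mul_add, swap_sq, one_mul, mul_one, one_mul]
  ext a b
  simp only [Matrix.smul_apply, Matrix.add_apply, Matrix.one_apply, smul_eq_mul]
  ring

variable {X : Matrix (Fin 2 → Fin d) (Fin 2 → Fin d) ℂ}

lemma smul_X (hDS : IsDS (Fin 2) d X) :
    permMatrix (Fin 2) d (Equiv.swap 0 1) * X = X := by
  have h := hDS.1
  have hPX : symProj (Fin 2) d * X = X := by
    conv_lhs => rw [← h]
    rw [show symProj (Fin 2) d * (symProj (Fin 2) d * X * symProj (Fin 2) d)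
        = (symProj (Fin 2) d * symProj (Fin 2) d) * X * symProj (Fin 2) d by noncomm_ring,
      symProj_idem, h]
  rw [symProj_eq, Matrix.smul_mul, add_mul, one_mul] at hPX
  have h2 : X + permMatrix (Fin 2) d (Equiv.swap 0 1) * X = (2:ℂ) • X := by
    have := congrArg (fun M => (2:ℂ) • M) hPX
    simpa [smul_smul] using this
  have := h2
  rw [two_smul] at this
  exact add_left_cancel this

lemma X_smul (hDS : IsDS (Fin 2) d X) :
    X * permMatrix (Fin 2) d (Equiv.swap 0 1) = X := by
  have h := hDS.1
  have hXP : X * symProj (Fin 2) d = X := by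
    conv_lhs => rw [← h]
    rw [show symProj (Fin 2) d * X * symProj (Fin 2) d * symProj (Fin 2) d
        = symProj (Fin 2) d * X * (symProj (Fin 2) d * symProj (Fin 2) d) by noncomm_ring,
      symProj_idem, h]
  rw [symProj_eq, Matrix.mul_smul, mul_add, mul_one] at hXP
  have h2 : X + X * permMatrix (Fin 2) d (Equiv.swap 0 1) = (2:ℂ) • X := by
    have := congrArg (fun M => (2:ℂ) • M) hXP
    simpa [smul_smul] using this
  rw [two_smul] at h2
  exact add_left_cancel h2

lemma swapL (hDS : IsDS (Fin 2) d X) (i j : Fin d) (b : Fin 2 → Fin d) :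
    X ![j, i] b = X ![i, j] b := by
  have := congrFun (congrFun (congrArg (fun M => (M : Matrix _ _ ℂ)) (smul_X hDS)) ![i,j]) b
  rw [permMatrix_mul] at this
  simp only [Matrix.of_apply] at this
  rw [← this]
  congr 1
  funext k; fin_cases k <;> simp

lemma swapR (hDS : IsDS (Fin 2) d X) (a : Fin 2 → Fin d) (i j : Fin d) :
    X a ![j, i] = X a ![i, j] := by
  have := congrFun (congrFun (congrArg (fun M => (M : Matrix _ _ ℂ)) (X_smul hDS)) a) ![i,j]
  rw [mul_permMatrix] at this
  simp only [Matrix.of_apply] at this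
  rw [← this]
  congr 1
  funext k; fin_cases k <;> simp

def cnt (a : Fin 2 → Fin d) (m : Fin d) : ℕ :=
  (if a 0 = m then 1 else 0) + (if a 1 = m then 1 else 0)

lemma cnt_le_two (a : Fin 2 → Fin d) (m : Fin d) : cnt a m ≤ 2 := by
  unfold cnt; split_ifs <;> omega

lemma exists_cnt_ne {a b : Fin 2 → Fin d}
    (h1 : ¬(a 0 = b 0 ∧ a 1 = b 1)) (h2 : ¬(a 0 = b 1 ∧ a 1 = b 0)) :
    ∃ m, cnt a m ≠ cnt b m := by
  by_contra hc
  push_neg at hc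
  have h0 := hc (a 0)
  have h1' := hc (a 1)
  unfold cnt at h0 h1'
  rcases eq_or_ne (a 0) (a 1) with hA | hA <;>
  rcases eq_or_ne (b 0) (a 0) with e1 | e1 <;>
  rcases eq_or_ne (b 1) (a 0) with e2 | e2 <;>
  rcases eq_or_ne (b 0) (a 1) with e3 | e3 <;>
  rcases eq_or_ne (b 1) (a 1) with e4 | e4 <;>
    simp only [if_pos, if_neg, e1, e2, e3, e4, hA, eq_comm] at h0 h1' <;>
    simp_all <;> omega

lemma exp_cnt_inj {c1 c2 : ℕ} (hc1 : c1 ≤ 2) (hc2 : c2 ≤ 2) (hne : c1 ≠ c2) :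
    Complex.exp ((c1 : ℂ) * Complex.I) ≠ Complex.exp ((c2 : ℂ) * Complex.I) := by
  intro h
  rw [Complex.exp_eq_exp_iff_exists_int] at h
  obtain ⟨n, hn⟩ := h
  have h2 : ((c1 : ℂ)) * Complex.I = ((c2 : ℂ) + (n : ℂ) * (2 * (Real.pi : ℂ))) * Complex.I := by
    rw [hn]; ring
  have h3 : (c1 : ℂ) = (c2 : ℂ) + (n : ℂ) * (2 * (Real.pi : ℂ)) :=
    mul_right_cancel₀ Complex.I_ne_zero h2
  have h4 : (c1 : ℝ) = (c2 : ℝ) + (n : ℝ) * (2 * Real.pi) := by exact_mod_cast h3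
  have hpi := Real.pi_gt_three
  have hc1' : (c1 : ℝ) ≤ 2 := by exact_mod_cast hc1
  have hc2' : (c2 : ℝ) ≤ 2 := by exact_mod_cast hc2
  have hc1'' : (0 : ℝ) ≤ c1 := Nat.cast_nonneg _
  have hc2'' : (0 : ℝ) ≤ c2 := Nat.cast_nonneg _
  rcases lt_trichotomy n 0 with hn0 | hn0 | hn0
  · have hn1 : n ≤ -1 := by omega
    have : (n : ℝ) ≤ -1 := by exact_mod_cast hn1
    nlinarith
  · subst hn0
    simp at h4
    exact hne (by exact_mod_cast h4)
  · have hn1 : 1 ≤ n := by omega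
    have : (1 : ℝ) ≤ (n : ℝ) := by exact_mod_cast hn1
    nlinarith

lemma vanish (hDS : IsDS (Fin 2) d X) {a b : Fin 2 → Fin d}
    (h1 : ¬(a 0 = b 0 ∧ a 1 = b 1)) (h2 : ¬(a 0 = b 1 ∧ a 1 = b 0)) : X a b = 0 := by
  obtain ⟨m, hm⟩ := exists_cnt_ne h1 h2
  set θ : Fin d → ℝ := fun x => if x = m then 1 else 0 with hθ
  have hphase : ∀ x : Fin 2 → Fin d,
      (∏ k, Complex.exp ((θ (x k) : ℂ) * Complex.I)) = Complex.exp ((cnt x m : ℂ) * Complex.I) := by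
    intro x
    rw [Fin.prod_univ_two, ← Complex.exp_add, ← add_mul]
    congr 2
    simp only [hθ, cnt]
    split_ifs <;> norm_num
  have hD := hDS.2 θ
  have hE : (Matrix.diagonal (fun i : Fin 2 → Fin d =>
      ∏ k, Complex.exp ((θ (i k) : ℂ) * Complex.I)) * X) a b
      = (X * Matrix.diagonal (fun i : Fin 2 → Fin d =>
      ∏ k, Complex.exp ((θ (i k) : ℂ) * Complex.I))) a b := by rw [hD]
  rw [Matrix.diagonal_mul, Matrix.mul_diagonal, hphase, hphase] at hE
  have hne := exp_cnt_inj (cnt_le_two a m) (cnt_le_two b m) hm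
  have : (Complex.exp ((cnt a m : ℂ) * Complex.I)
      - Complex.exp ((cnt b m : ℂ) * Complex.I)) * X a b = 0 := by
    rw [sub_mul, hE]; ring
  rcases mul_eq_zero.mp this with h | h
  · exact absurd (sub_eq_zero.mp h) hne
  · exact h


lemma ptranspose_apply (a b : Fin 2 → Fin d) :
    ptranspose ({0} : Finset (Fin 2)) X a b = X ![b 0, a 1] ![a 0, b 1] := by
  show X _ _ = _
  congr 1 <;> funext k <;> fin_cases k <;> simp

lemma diag_nonneg (hstate : X.PosSemidef) (a : Fin 2 → Fin d) : 0 ≤ X a a := by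
  have h := hstate.dotProduct_mulVec_nonneg (Pi.single a 1)
  have : dotProduct (star (Pi.single a 1)) (X.mulVec (Pi.single a 1)) = X a a := by
    simp [dotProduct, Matrix.mulVec, Pi.single_apply, Finset.sum_ite_eq',
      apply_ite (star : ℂ → ℂ)]
  rwa [this] at h

lemma diag_real (hstate : X.PosSemidef) (a : Fin 2 → Fin d) :
    X a a = ((X a a).re : ℂ) := by
  have h := diag_nonneg hstate a
  rw [Complex.le_def] at h
  exact Complex.ext rfl (by simpa using h.2.symm)

def embedB (d : ℕ) : Matrix (Fin d) (Fin 2 → Fin d) ℂ :=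
  Matrix.of fun i a => if a = fun _ => i then 1 else 0

lemma const_iff (x : Fin 2 → Fin d) (i : Fin d) :
    (x = fun _ => i) ↔ (x 0 = x 1 ∧ i = x 0) := by
  constructor
  · intro h; subst h; exact ⟨rfl, rfl⟩
  · rintro ⟨hx, hi⟩; funext k; fin_cases k
    · simp [hi]
    · simp [hi, ← hx]

lemma embed_apply (Q : Matrix (Fin d) (Fin d) ℂ) (a b : Fin 2 → Fin d) :
    ((embedB d)ᴴ * Q * embedB d) a b =
      if a 0 = a 1 ∧ b 0 = b 1 then Q (a 0) (b 0) else 0 := by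
  simp only [Matrix.mul_apply, Matrix.conjTranspose_apply, embedB, Matrix.of_apply,
    const_iff, apply_ite (star : ℂ → ℂ), star_one, star_zero, ite_mul, mul_ite, one_mul, zero_mul,
    mul_zero, mul_one]
  by_cases ha : a 0 = a 1 <;> by_cases hb : b 0 = b 1 <;>
    simp [ha, hb, Finset.sum_ite_eq']

lemma eta2 (a : Fin 2 → Fin d) : ![a 0, a 1] = a := by
  funext k; fin_cases k <;> simp

lemma hq_real (hstate : X.PosSemidef) (i j : Fin d) :
    X ![i, j] ![i, j] = (((Matrix.of fun i j : Fin d => (X ![i, j] ![i, j]).re) : Matrix (Fin d) (Fin d) ℝ).map Complex.ofReal) i j := by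
  simpa using diag_real hstate ![i, j]

lemma decomp (hDS : IsDS (Fin 2) d X) (hstate : X.PosSemidef) :
    ptranspose ({0} : Finset (Fin 2)) X =
      Matrix.diagonal (fun a : Fin 2 → Fin d => if a 0 = a 1 then 0 else X a a) +
        (embedB d)ᴴ * (((Matrix.of fun i j : Fin d => (X ![i, j] ![i, j]).re) : Matrix (Fin d) (Fin d) ℝ).map Complex.ofReal) * embedB d := by
  ext a b
  rw [Matrix.add_apply, ptranspose_apply, embed_apply]
  by_cases ha : a 0 = a 1 <;> by_cases hb : b 0 = b 1
  · rw [if_pos (show a 0 = a 1 ∧ b 0 = b 1 from ⟨ha, hb⟩)]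
    have hd : Matrix.diagonal (fun a : Fin 2 → Fin d => if a 0 = a 1 then 0 else X a a) a b = 0 := by
      by_cases hab : a = b <;> simp [Matrix.diagonal_apply, hab, ha, hb]
    rw [hd, zero_add]
    have e1 : X ![b 0, a 1] ![a 0, b 1] = X ![b 0, a 0] ![a 0, b 0] := by
      rw [← ha, ← hb]
    rw [e1, swapL hDS (a 0) (b 0), ← hq_real hstate]
  · have hd : Matrix.diagonal (fun a : Fin 2 → Fin d => if a 0 = a 1 then 0 else X a a) a b = 0 := by
      have hab : a ≠ b := fun h => hb (by rw [← h]; exact ha)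
      simp [Matrix.diagonal_apply, hab]
    rw [if_neg (show ¬(a 0 = a 1 ∧ b 0 = b 1) from fun h => hb h.2), hd, zero_add]
    apply vanish hDS <;>
      simp only [Matrix.cons_val_zero, Matrix.cons_val_one, Matrix.head_cons, not_and] <;>
      intro c1 c2
    · exact hb (c1.trans (ha.trans c2))
    · exact hb c1
  · have hd : Matrix.diagonal (fun a : Fin 2 → Fin d => if a 0 = a 1 then 0 else X a a) a b = 0 := by
      have hab : a ≠ b := fun h => ha (by rw [h]; exact hb)
      simp [Matrix.diagonal_apply, hab]
    rw [if_neg (show ¬(a 0 = a 1 ∧ b 0 = b 1) from fun h => ha h.1), hd, zero_add]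
    apply vanish hDS <;>
      simp only [Matrix.cons_val_zero, Matrix.cons_val_one, Matrix.head_cons, not_and] <;>
      intro c1 c2
    · exact ha (c1.symm.trans (hb.trans c2.symm))
    · exact ha c2.symm
  · rw [if_neg (show ¬(a 0 = a 1 ∧ b 0 = b 1) from fun h => ha h.1), add_zero]
    by_cases hab : a = b
    · subst hab
      rw [show Matrix.diagonal (fun a : Fin 2 → Fin d => if a 0 = a 1 then 0 else X a a) a a
          = X a a from by simp [Matrix.diagonal_apply, ha]]
      rw [show (![a 0, a 1] : Fin 2 → Fin d) = a from eta2 a]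
    · rw [Matrix.diagonal_apply_ne _ hab]
      apply vanish hDS <;>
        simp only [Matrix.cons_val_zero, Matrix.cons_val_one, Matrix.head_cons, not_and] <;>
        intro c1 c2
      · exact hab (funext fun k => by fin_cases k; exacts [c1.symm, c2])
      · exact hb c1

lemma E_psd {Q : Matrix (Fin d) (Fin d) ℂ} (h : Q.PosSemidef) :
    ((embedB d)ᴴ * Q * embedB d).PosSemidef :=
  h.conjTranspose_mul_mul_same _

lemma Qc_submatrix (hDS : IsDS (Fin 2) d X) (hstate : X.PosSemidef) :
    (((Matrix.of fun i j : Fin d => (X ![i, j] ![i, j]).re) : Matrix (Fin d) (Fin d) ℝ).map Complex.ofReal) =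
      (ptranspose ({0} : Finset (Fin 2)) X).submatrix
        (fun i : Fin d => (fun _ => i : Fin 2 → Fin d)) (fun i : Fin d => (fun _ => i : Fin 2 → Fin d)) := by
  ext i j
  rw [Matrix.submatrix_apply, ptranspose_apply, ← hq_real hstate i j]
  exact (swapL hDS i j ![i, j]).symm

end Stmt11Aux

/-- a diagonally symmetric two-qudit state `X` is PPT iff the `d × d` matrix
`Q_{ij} = ⟨ij|X|ij⟩` is doubly non-negative (entrywise non-negative and PSD). -/
theorem stmt_11 (d : ℕ) (X : Matrix (Fin 2 → Fin d) (Fin 2 → Fin d) ℂ)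
    (hDS : IsDS (Fin 2) d X) (hstate : X.PosSemidef) :
    (X.PosSemidef ∧ (ptranspose ({0} : Finset (Fin 2)) X).PosSemidef) ↔
      ((∀ i j : Fin d, 0 ≤ (X ![i, j] ![i, j]).re) ∧
        (Matrix.of fun i j : Fin d => (X ![i, j] ![i, j]).re).PosSemidef) := by
  constructor
  · rintro ⟨-, hY⟩
    refine ⟨fun i j => ?_, ?_⟩
    · simpa using (Complex.le_def.mp (diag_nonneg hstate ![i, j])).1
    · apply psd_of_map_ofReal
      rw [Qc_submatrix hDS hstate]
      exact hY.submatrix _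
  · rintro ⟨-, hQr⟩
    refine ⟨hstate, ?_⟩
    rw [decomp hDS hstate]
    apply Matrix.PosSemidef.add
    · refine Matrix.posSemidef_diagonal_iff.mpr fun a => ?_
      by_cases h : a 0 = a 1 <;> simp [h, diag_nonneg hstate a]
    · exact E_psd (psd_map_ofReal hQr)
end

section
/- A diagonally symmetric two-qudit state X is separable if and only if the d × d matrix Q with Q_{ij} = ⟨ij|X|ij⟩ is a completely positive matrix, i.e., Q = Σ_q v_q v_q^T for entrywise non-negative vectors v_q ∈ ℝ_+^d. -/
open ComplexOrder

namespace Aux12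

variable {d : ℕ}

lemma fin2_eta {α : Type*} (a : Fin 2 → α) : a = ![a 0, a 1] := by
  funext k; fin_cases k <;> rfl

lemma perm_mul_apply (σ : Equiv.Perm (Fin 2)) (X : Matrix (Fin 2 → Fin d) (Fin 2 → Fin d) ℂ)
    (a b : Fin 2 → Fin d) :
    (permMatrix (Fin 2) d σ * X) a b = X (fun k => a (σ k)) b := by
  rw [Matrix.mul_apply, Finset.sum_eq_single (fun k => a (σ k))]
  · simp [permMatrix]
  · intro c _ hc
    have hcc : ¬ (a = fun k => c (σ⁻¹ k)) := by
      intro h; apply hc; funext k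
      have := congrFun h (σ k); simpa using this.symm
    rw [Equiv.Perm.inv_def] at hcc; simp [permMatrix, hcc]
  · simp

lemma mul_perm_apply (X : Matrix (Fin 2 → Fin d) (Fin 2 → Fin d) ℂ) (σ : Equiv.Perm (Fin 2))
    (a b : Fin 2 → Fin d) :
    (X * permMatrix (Fin 2) d σ) a b = X a (fun k => b (σ⁻¹ k)) := by
  rw [Matrix.mul_apply, Finset.sum_eq_single (fun k => b (σ⁻¹ k))]
  · simp [permMatrix]
  · intro c _ hc; rw [Equiv.Perm.inv_def] at hc; simp [permMatrix, hc]
  · simp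

lemma symProj_eq : (symProj (Fin 2) d)
    = (2:ℂ)⁻¹ • (permMatrix (Fin 2) d 1 + permMatrix (Fin 2) d (Equiv.swap 0 1)) := by
  unfold symProj
  rw [show (Finset.univ : Finset (Equiv.Perm (Fin 2))) = {1, Equiv.swap 0 1} from by decide]
  rw [Finset.sum_pair (by decide)]
  norm_num

lemma avg_eq (X : Matrix (Fin 2 → Fin d) (Fin 2 → Fin d) ℂ)
    (h : symProj (Fin 2) d * X * symProj (Fin 2) d = X) (a b : Fin 2 → Fin d) :
    X a b = (4:ℂ)⁻¹ * (X a b + X (fun k => a (Equiv.swap 0 1 k)) b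
      + X a (fun k => b (Equiv.swap 0 1 k))
      + X (fun k => a (Equiv.swap 0 1 k)) (fun k => b (Equiv.swap 0 1 k))) := by
  conv_lhs => rw [← h]
  rw [symProj_eq]
  simp only [Matrix.smul_mul, Matrix.mul_smul, Matrix.add_mul, Matrix.mul_add,
    Matrix.smul_apply, Matrix.add_apply, smul_eq_mul]
  simp only [mul_perm_apply, perm_mul_apply, Equiv.Perm.coe_one, id_eq, inv_one, Equiv.swap_inv]
  ring

lemma swap_left (X : Matrix (Fin 2 → Fin d) (Fin 2 → Fin d) ℂ)
    (h : symProj (Fin 2) d * X * symProj (Fin 2) d = X) (a b : Fin 2 → Fin d) :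
    X (fun k => a (Equiv.swap 0 1 k)) b = X a b := by
  have e1 := avg_eq X h a b
  have e2 := avg_eq X h (fun k => a (Equiv.swap 0 1 k)) b
  simp only [Equiv.swap_apply_self] at e2
  linear_combination e2 - e1

lemma swap_right (X : Matrix (Fin 2 → Fin d) (Fin 2 → Fin d) ℂ)
    (h : symProj (Fin 2) d * X * symProj (Fin 2) d = X) (a b : Fin 2 → Fin d) :
    X a (fun k => b (Equiv.swap 0 1 k)) = X a b := by
  have e1 := avg_eq X h a b
  have e2 := avg_eq X h a (fun k => b (Equiv.swap 0 1 k))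
  simp only [Equiv.swap_apply_self] at e2
  linear_combination e2 - e1

lemma Ipow_ne (m n : ℕ) (hm : m ≤ 2) (hn : n ≤ 2) (hmn : m ≠ n) :
    Complex.I ^ m ≠ Complex.I ^ n := by
  interval_cases m <;> interval_cases n <;>
    simp_all [pow_succ, Complex.ext_iff] <;> norm_num

lemma count_kill (X : Matrix (Fin 2 → Fin d) (Fin 2 → Fin d) ℂ)
    (hd : ∀ θ : Fin d → ℝ,
      Matrix.diagonal (fun i : Fin 2 → Fin d => ∏ k, Complex.exp ((θ (i k) : ℂ) * Complex.I)) * X =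
      X * Matrix.diagonal fun i : Fin 2 → Fin d => ∏ k, Complex.exp ((θ (i k) : ℂ) * Complex.I))
    (a b : Fin 2 → Fin d) (i0 : Fin d)
    (hne : ((if a 0 = i0 then 1 else 0) + (if a 1 = i0 then 1 else 0) : ℕ)
         ≠ (if b 0 = i0 then 1 else 0) + (if b 1 = i0 then 1 else 0)) :
    X a b = 0 := by
  set θ : Fin d → ℝ := fun i => if i = i0 then Real.pi / 2 else 0 with hθ
  have g : ∀ j : Fin d, Complex.exp ((θ j : ℂ) * Complex.I)
      = Complex.I ^ (if j = i0 then 1 else 0 : ℕ) := by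
    intro j
    by_cases hj : j = i0
    · simp only [hθ, hj, if_pos rfl, pow_one]
      rw [Complex.exp_mul_I, ← Complex.ofReal_cos, ← Complex.ofReal_sin,
        Real.cos_pi_div_two, Real.sin_pi_div_two]
      simp
    · simp [hθ, hj]
  have key : ∀ c : Fin 2 → Fin d, (∏ k, Complex.exp ((θ (c k) : ℂ) * Complex.I))
      = Complex.I ^ ((if c 0 = i0 then 1 else 0) + (if c 1 = i0 then 1 else 0) : ℕ) := by
    intro c
    rw [Fin.prod_univ_two, g, g, ← pow_add]
  have h' := congrArg (fun M : Matrix (Fin 2 → Fin d) (Fin 2 → Fin d) ℂ => M a b) (hd θ)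
  simp only [Matrix.diagonal_mul, Matrix.mul_diagonal, key] at h'
  have h0 : (Complex.I ^ ((if a 0 = i0 then 1 else 0) + (if a 1 = i0 then 1 else 0) : ℕ)
      - Complex.I ^ ((if b 0 = i0 then 1 else 0) + (if b 1 = i0 then 1 else 0) : ℕ)) * X a b = 0 := by
    linear_combination h'
  rcases mul_eq_zero.1 h0 with h1 | h1
  · exact absurd (sub_eq_zero.1 h1)
      (Ipow_ne _ _ (by split_ifs <;> norm_num) (by split_ifs <;> norm_num) hne)
  · exact h1

lemma phase_sum (cA cB : ℕ) (hA : cA ≤ 2) (hB : cB ≤ 2) :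
    (∑ m : Fin 4, Complex.I ^ ((m : ℕ) * cA) * (-Complex.I) ^ ((m : ℕ) * cB))
      = if cA = cB then 4 else 0 := by
  interval_cases cA <;> interval_cases cB <;>
    norm_num [Fin.sum_univ_four, pow_succ, Complex.I_sq,
      show ((3:Fin 4):ℕ) = 3 from rfl, show ((2:Fin 4):ℕ) = 2 from rfl]

lemma count_pair {α : Type*} [DecidableEq α] (a b : Fin 2 → α)
    (h : ∀ i, ((if a 0 = i then 1 else 0) + (if a 1 = i then 1 else 0) : ℕ)
            = (if b 0 = i then 1 else 0) + (if b 1 = i then 1 else 0)) :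
    (a 0 = b 0 ∧ a 1 = b 1) ∨ (a 0 = b 1 ∧ a 1 = b 0) := by
  have hm : ({a 0, a 1} : Multiset α) = {b 0, b 1} := by
    rw [Multiset.ext]
    intro i
    have hi := h i
    simp only [Multiset.insert_eq_cons, Multiset.count_cons, Multiset.count_singleton]
    rw [show (if a 0 = i then 1 else 0 : ℕ) = if i = a 0 then 1 else 0 from if_congr eq_comm rfl rfl,
      show (if a 1 = i then 1 else 0 : ℕ) = if i = a 1 then 1 else 0 from if_congr eq_comm rfl rfl,
      show (if b 0 = i then 1 else 0 : ℕ) = if i = b 0 then 1 else 0 from if_congr eq_comm rfl rfl,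
      show (if b 1 = i then 1 else 0 : ℕ) = if i = b 1 then 1 else 0 from if_congr eq_comm rfl rfl] at hi
    omega
  rw [show ({a 0, a 1} : Multiset α) = a 0 ::ₘ {a 1} from rfl,
    show ({b 0, b 1} : Multiset α) = b 0 ::ₘ {b 1} from rfl, Multiset.cons_eq_cons] at hm
  rcases hm with ⟨h1, h2⟩ | ⟨-, cs, h1, h2⟩
  · exact Or.inl ⟨h1, Multiset.singleton_inj.1 h2⟩
  · rcases (Multiset.singleton_eq_cons_iff _).1 h1 with ⟨h3, h4⟩
    subst h4
    rcases (Multiset.singleton_eq_cons_iff _).1 h2 with ⟨h5, -⟩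
    exact Or.inr ⟨h5.symm, h3⟩

lemma phase_prod (z : ℂ) (χ : Fin d → ℕ) (a : Fin 2 → Fin d) :
    (∏ i, z ^ (χ i * ((if a 0 = i then 1 else 0) + (if a 1 = i then 1 else 0))))
      = z ^ (χ (a 0)) * z ^ (χ (a 1)) := by
  have hsplit : ∀ i : Fin d, χ i * ((if a 0 = i then 1 else 0) + (if a 1 = i then 1 else 0))
      = χ i * (if a 0 = i then 1 else 0) + χ i * (if a 1 = i then 1 else 0) := fun i => by ring
  simp_rw [hsplit, pow_add]
  rw [Finset.prod_mul_distrib]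
  congr 1
  · rw [Finset.prod_pow_eq_pow_sum]
    congr 1
    simp [mul_ite]
  · rw [Finset.prod_pow_eq_pow_sum]
    congr 1
    simp [mul_ite]

lemma rhs_entry (K : ℕ) (w : Fin K → Fin d → ℝ) (a b : Fin 2 → Fin d) :
    (∑ p : Fin K × (Fin d → Fin 4),
      (∏ k, ((((Real.sqrt 2)⁻¹ ^ d : ℝ) : ℂ) * Complex.I ^ ((p.2 (a k) : ℕ))
          * (Real.sqrt (w p.1 (a k)) : ℂ)))
        * star (∏ k, ((((Real.sqrt 2)⁻¹ ^ d : ℝ) : ℂ) * Complex.I ^ ((p.2 (b k) : ℕ))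
          * (Real.sqrt (w p.1 (b k)) : ℂ))))
    = if (∀ i : Fin d, ((if a 0 = i then 1 else 0) + (if a 1 = i then 1 else 0) : ℕ)
          = ((if b 0 = i then 1 else 0) + (if b 1 = i then 1 else 0)))
      then ∑ q, ((Real.sqrt (w q (a 0)) * Real.sqrt (w q (a 1))
          * Real.sqrt (w q (b 0)) * Real.sqrt (w q (b 1)) : ℝ) : ℂ)
      else 0 := by
  rw [Fintype.sum_prod_type]
  have hterm : ∀ (q : Fin K) (χ : Fin d → Fin 4),
      ((∏ k, ((((Real.sqrt 2)⁻¹ ^ d : ℝ) : ℂ) * Complex.I ^ ((χ (a k) : ℕ))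
          * (Real.sqrt (w q (a k)) : ℂ)))
        * star (∏ k, ((((Real.sqrt 2)⁻¹ ^ d : ℝ) : ℂ) * Complex.I ^ ((χ (b k) : ℕ))
          * (Real.sqrt (w q (b k)) : ℂ))))
      = (∏ i, (Complex.I ^ ((χ i : ℕ) * ((if a 0 = i then 1 else 0) + (if a 1 = i then 1 else 0)))
          * (-Complex.I) ^ ((χ i : ℕ) * ((if b 0 = i then 1 else 0) + (if b 1 = i then 1 else 0)))))
        * (((((Real.sqrt 2)⁻¹ ^ d : ℝ) : ℂ))^4
          * ((Real.sqrt (w q (a 0)) * Real.sqrt (w q (a 1))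
              * Real.sqrt (w q (b 0)) * Real.sqrt (w q (b 1)) : ℝ) : ℂ)) := by
    intro q χ
    conv_rhs => rw [Finset.prod_mul_distrib, phase_prod, phase_prod]
    rw [Fin.prod_univ_two, Fin.prod_univ_two]
    simp only [star_mul', star_pow, Complex.star_def, Complex.conj_I, Complex.conj_ofReal]
    push_cast
    ring
  simp only [hterm]
  simp_rw [← Finset.sum_mul]
  rw [← Fintype.prod_sum (fun (i : Fin d) (m : Fin 4) =>
    Complex.I ^ ((m : ℕ) * ((if a 0 = i then 1 else 0) + (if a 1 = i then 1 else 0)))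
      * (-Complex.I) ^ ((m : ℕ) * ((if b 0 = i then 1 else 0) + (if b 1 = i then 1 else 0))))]
  have hfac : ∀ i : Fin d,
      (∑ m : Fin 4, Complex.I ^ ((m : ℕ) * ((if a 0 = i then 1 else 0) + (if a 1 = i then 1 else 0)))
        * (-Complex.I) ^ ((m : ℕ) * ((if b 0 = i then 1 else 0) + (if b 1 = i then 1 else 0))))
      = if ((if a 0 = i then 1 else 0) + (if a 1 = i then 1 else 0) : ℕ)
          = ((if b 0 = i then 1 else 0) + (if b 1 = i then 1 else 0)) then 4 else 0 := by
    intro i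
    exact phase_sum _ _ (by split_ifs <;> norm_num) (by split_ifs <;> norm_num)
  simp_rw [hfac]
  by_cases hall : ∀ i : Fin d, ((if a 0 = i then 1 else 0) + (if a 1 = i then 1 else 0) : ℕ)
      = ((if b 0 = i then 1 else 0) + (if b 1 = i then 1 else 0))
  · rw [if_pos hall]
    rw [Finset.prod_congr rfl (fun i _ => if_pos (hall i)), Finset.prod_const,
      Finset.card_univ, Fintype.card_fin]
    apply Finset.sum_congr rfl
    intro q _
    have hr4 : ((4:ℂ))^d * ((((Real.sqrt 2)⁻¹ ^ d : ℝ) : ℂ))^4 = 1 := by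
      have h2 : ((Real.sqrt 2)⁻¹ ^ d : ℝ)^4 = (4⁻¹ : ℝ)^d := by
        rw [← pow_mul, mul_comm d 4, pow_mul]
        congr 1
        rw [show ((Real.sqrt 2)⁻¹)^4 = (((Real.sqrt 2)^2)^2)⁻¹ by ring]
        rw [Real.sq_sqrt (by norm_num : (0:ℝ) ≤ 2)]
        norm_num
      have := congrArg (fun x : ℝ => ((x : ℂ))) h2
      push_cast at this ⊢
      rw [this, ← mul_pow]
      norm_num
    calc (4:ℂ)^d * (((((Real.sqrt 2)⁻¹ ^ d : ℝ) : ℂ))^4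
          * ((Real.sqrt (w q (a 0)) * Real.sqrt (w q (a 1))
              * Real.sqrt (w q (b 0)) * Real.sqrt (w q (b 1)) : ℝ) : ℂ))
        = ((4:ℂ)^d * ((((Real.sqrt 2)⁻¹ ^ d : ℝ) : ℂ))^4)
          * ((Real.sqrt (w q (a 0)) * Real.sqrt (w q (a 1))
              * Real.sqrt (w q (b 0)) * Real.sqrt (w q (b 1)) : ℝ) : ℂ) := by ring
      _ = _ := by rw [hr4, one_mul]
  · rw [if_neg hall]
    push_neg at hall
    obtain ⟨i0, hi0⟩ := hall
    have hz : (∏ i : Fin d, (if ((if a 0 = i then 1 else 0) + (if a 1 = i then 1 else 0) : ℕ)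
        = ((if b 0 = i then 1 else 0) + (if b 1 = i then 1 else 0)) then (4:ℂ) else 0)) = 0 :=
      Finset.prod_eq_zero (Finset.mem_univ i0) (if_neg hi0)
    rw [hz]
    simp

end Aux12

/-- a diagonally symmetric two-qudit state `X` is separable (a non-negative
combination of `|v⟩⟨v|^{⊗2}`) iff the `d × d` matrix `Q_{ij} = ⟨ij|X|ij⟩` is a completely
positive matrix `Q = ∑_q v_q v_qᵀ` with `v_q` entrywise non-negative. -/
theorem stmt_12 (d : ℕ) (X : Matrix (Fin 2 → Fin d) (Fin 2 → Fin d) ℂ)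
    (hDS : IsDS (Fin 2) d X) (hstate : X.PosSemidef) :
    (∃ (K : ℕ) (v : Fin K → Fin d → ℂ),
        X = ∑ q, Matrix.of fun a b : Fin 2 → Fin d =>
          (∏ k, v q (a k)) * star (∏ k, v q (b k))) ↔
      ∃ (K : ℕ) (w : Fin K → Fin d → ℝ), (∀ q i, 0 ≤ w q i) ∧
        ∀ i j : Fin d, X ![i, j] ![i, j] = ((∑ q, w q i * w q j : ℝ) : ℂ) := by
  classical
  constructor
  · rintro ⟨K, v, hX⟩
    refine ⟨K, fun q i => Complex.normSq (v q i), fun q i => Complex.normSq_nonneg _, ?_⟩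
    intro i j
    rw [hX, Matrix.sum_apply]
    push_cast
    apply Finset.sum_congr rfl
    intro q _
    simp only [Matrix.of_apply, Fin.prod_univ_two, Matrix.cons_val_zero, Matrix.cons_val_one,
      Matrix.head_cons]
    rw [Complex.star_def, Complex.mul_conj, Complex.normSq_mul]
    push_cast
    ring
  · rintro ⟨K, w, hw, hQ⟩
    have hQ' : ∀ c : Fin 2 → Fin d, X c c = ((∑ q, w q (c 0) * w q (c 1) : ℝ) : ℂ) := by
      intro c
      have := hQ (c 0) (c 1)
      rwa [← Aux12.fin2_eta c] at this
    refine ⟨Fintype.card (Fin K × (Fin d → Fin 4)), fun q i =>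
      ((((Real.sqrt 2)⁻¹ ^ d : ℝ)) : ℂ)
        * Complex.I ^ ((((Fintype.equivFin (Fin K × (Fin d → Fin 4))).symm q).2 i : ℕ))
        * (Real.sqrt (w ((Fintype.equivFin (Fin K × (Fin d → Fin 4))).symm q).1 i) : ℂ), ?_⟩
    ext a b
    rw [Matrix.sum_apply]
    rw [← Equiv.sum_comp (Fintype.equivFin (Fin K × (Fin d → Fin 4)))]
    simp only [Equiv.symm_apply_apply, Matrix.of_apply]
    rw [Aux12.rhs_entry K w a b]
    by_cases hall : ∀ i : Fin d, ((if a 0 = i then 1 else 0) + (if a 1 = i then 1 else 0) : ℕ)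
        = ((if b 0 = i then 1 else 0) + (if b 1 = i then 1 else 0))
    · rw [if_pos hall]
      rcases Aux12.count_pair a b hall with ⟨h1, h2⟩ | ⟨h1, h2⟩
      · have hb : b = a := by
          funext k; fin_cases k <;> simp [← h1, ← h2]
        rw [hb, hQ' a]
        push_cast
        apply Finset.sum_congr rfl
        intro q _
        norm_cast
        linear_combination (-(Real.sqrt (w q (a 1)) * Real.sqrt (w q (a 1))))
            * Real.mul_self_sqrt (hw q (a 0))
          + (-(w q (a 0))) * Real.mul_self_sqrt (hw q (a 1))
      · have hb : (fun k => b (Equiv.swap 0 1 k)) = a := by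
          funext k; fin_cases k <;>
            simp [Equiv.swap_apply_left, Equiv.swap_apply_right, ← h1, ← h2]
        rw [← Aux12.swap_right X hDS.1 a b, hb, hQ' a]
        rw [← h1, ← h2]
        push_cast
        apply Finset.sum_congr rfl
        intro q _
        norm_cast
        linear_combination (-(Real.sqrt (w q (a 1)) * Real.sqrt (w q (a 1))))
            * Real.mul_self_sqrt (hw q (a 0))
          + (-(w q (a 0))) * Real.mul_self_sqrt (hw q (a 1))
    · rw [if_neg hall]
      push_neg at hall
      obtain ⟨i0, hi0⟩ := hall
      exact Aux12.count_kill X hDS.2 a b i0 hi0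
end

section
/- Let O be a self-adjoint diagonally symmetric matrix on (ℂ^d)^{⊗n} and define the symmetric tensor W[O]_i = binom(n, γ(i)) ⟨i|O|i⟩. Then ⟨v^{⊗n}, O v^{⊗n}⟩ ≥ 0 for all v ∈ ℂ^d if and only if the polynomial p_{W[O]}(x) = Σ_{i∈[d]^n} W[O]_i x_{i_1}⋯x_{i_n} is non-negative on the non-negative orthant ℝ_+^d (i.e., W[O] is a copositive tensor). -/
open ComplexOrder

/-- The occupation vector `γ(i)` of a multi-index `i`: `γ(i)_j = #{k : i k = j}`. -/
def occ {ι : Type} [Fintype ι] (d : ℕ) (i : ι → Fin d) : Fin d → ℕ :=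
  fun j => (Finset.univ.filter fun k => i k = j).card

lemma occ_comp_perm {n d : ℕ} (i : Fin n → Fin d) (σ : Equiv.Perm (Fin n)) :
    occ d (i ∘ σ) = occ d i := by
  funext a
  unfold occ
  exact Finset.card_bij (fun k _ => σ k)
    (fun k hk => by simpa using (Finset.mem_filter.1 hk).2)
    (fun k _ k' _ h => σ.injective h)
    (fun m hm => ⟨σ⁻¹ m, by simpa using (Finset.mem_filter.1 hm).2, by simp⟩)

lemma prod_occ {n d : ℕ} {M : Type*} [CommMonoid M] (i : Fin n → Fin d) (f : Fin d → M) :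
    ∏ k, f (i k) = ∏ a, f a ^ occ d i a := by
  rw [← Finset.prod_fiberwise_of_maps_to (g := i) (fun x _ => Finset.mem_univ (i x))
    (fun k => f (i k))]
  refine Finset.prod_congr rfl fun a _ => ?_
  rw [Finset.prod_congr rfl (fun k hk => by rw [(Finset.mem_filter.1 hk).2]),
    Finset.prod_const]
  rfl

lemma prod_eq_of_occ_eq {n d : ℕ} {M : Type*} [CommMonoid M] {i j : Fin n → Fin d}
    (h : occ d i = occ d j) (f : Fin d → M) :
    ∏ k, f (i k) = ∏ k, f (j k) := by
  rw [prod_occ, prod_occ, h]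

lemma sum_occ {n d : ℕ} (i : Fin n → Fin d) : ∑ a, occ d i a = n := by
  have := Finset.card_eq_sum_card_fiberwise (f := i) (s := Finset.univ) (t := Finset.univ)
    (fun x _ => Finset.mem_univ (i x))
  simpa [occ] using this.symm

lemma exists_perm_comp {n d : ℕ} {i j : Fin n → Fin d} (h : occ d i = occ d j) :
    ∃ σ : Equiv.Perm (Fin n), i ∘ σ = j := by
  have hc : ∀ a, Fintype.card {k // j k = a} = Fintype.card {k // i k = a} := by
    intro a
    simp only [Fintype.card_subtype]
    exact (congrFun h a).symm
  let e : ∀ a, {k // j k = a} ≃ {k // i k = a} := fun a => Fintype.equivOfCardEq (hc a)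
  refine ⟨(Equiv.sigmaFiberEquiv j).symm.trans
    ((Equiv.sigmaCongrRight e).trans (Equiv.sigmaFiberEquiv i)), ?_⟩
  funext k
  exact (e (j k) ⟨k, rfl⟩).2


lemma permMatrix_mul_s14 (ι : Type) [Fintype ι] [DecidableEq ι] (d : ℕ) (σ τ : Equiv.Perm ι) :
    permMatrix ι d σ * permMatrix ι d τ = permMatrix ι d (σ * τ) := by
  ext a b
  simp only [Matrix.mul_apply, permMatrix, Matrix.of_apply]
  simp only [mul_ite, mul_one, mul_zero]
  rw [Finset.sum_ite_eq' Finset.univ (fun k => b (τ⁻¹ k))]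
  simp [mul_inv_rev, Equiv.Perm.mul_apply, funext_iff]

lemma symProj_idem_s14 (ι : Type) [Fintype ι] [DecidableEq ι] (d : ℕ) :
    symProj ι d * symProj ι d = symProj ι d := by
  have hN : ((Nat.factorial (Fintype.card ι) : ℂ)) ≠ 0 := by
    exact_mod_cast Nat.cast_ne_zero.2 (Nat.factorial_ne_zero _)
  unfold symProj
  rw [Matrix.smul_mul, Matrix.mul_smul, smul_smul, Finset.sum_mul]
  have h1 : ∀ σ : Equiv.Perm ι,
      permMatrix ι d σ * (∑ τ : Equiv.Perm ι, permMatrix ι d τ)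
        = ∑ ρ : Equiv.Perm ι, permMatrix ι d ρ := by
    intro σ
    rw [Finset.mul_sum]
    rw [Fintype.sum_equiv (Equiv.mulLeft σ) _ _ (fun τ => permMatrix_mul_s14 ι d σ τ)]
  rw [Finset.sum_congr rfl (fun σ _ => h1 σ), Finset.sum_const]
  simp only [Finset.card_univ, Fintype.card_perm, Fintype.card_fin]
  rw [← Nat.cast_smul_eq_nsmul ℂ, smul_smul]
  congr 1
  field_simp


lemma occ_le {n d : ℕ} (i : Fin n → Fin d) (a : Fin d) : occ d i a ≤ n := by
  simpa [occ] using (Finset.card_filter_le Finset.univ (fun k => i k = a)).trans_eq (by simp)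

open Complex Real in
lemma offdiag_zero {n d : ℕ} (O : Matrix (Fin n → Fin d) (Fin n → Fin d) ℂ)
    (hcomm : ∀ θ : Fin d → ℝ,
      Matrix.diagonal (fun i : Fin n → Fin d => ∏ k, Complex.exp ((θ (i k) : ℂ) * Complex.I)) * O =
        O * Matrix.diagonal fun i : Fin n → Fin d => ∏ k, Complex.exp ((θ (i k) : ℂ) * Complex.I))
    {i j : Fin n → Fin d} (hne : occ d i ≠ occ d j) : O i j = 0 := by
  obtain ⟨a₀, ha₀⟩ := Function.ne_iff.1 hne
  set t : ℝ := Real.pi / (n + 1) with ht_def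
  have ht : 0 < t := div_pos Real.pi_pos (by positivity)
  set θ : Fin d → ℝ := fun a => if a = a₀ then t else 0 with hθ
  have hf : ∀ w : Fin n → Fin d,
      ∏ k, Complex.exp ((θ (w k) : ℂ) * Complex.I)
        = Complex.exp ((occ d w a₀ : ℂ) * ((t : ℂ) * Complex.I)) := by
    intro w
    rw [prod_occ w (fun a => Complex.exp ((θ a : ℂ) * Complex.I))]
    rw [Finset.prod_eq_single a₀ (fun b _ hb => by simp [hθ, hb])
      (fun h => absurd (Finset.mem_univ a₀) h)]
    rw [← Complex.exp_nat_mul]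
    simp [hθ]
  have h := hcomm θ
  have h2 : Complex.exp ((occ d i a₀ : ℂ) * ((t : ℂ) * Complex.I)) * O i j
      = O i j * Complex.exp ((occ d j a₀ : ℂ) * ((t : ℂ) * Complex.I)) := by
    have := congrFun (congrFun h i) j
    simpa [Matrix.diagonal_mul, Matrix.mul_diagonal, hf] using this
  by_contra hO
  have hexp : Complex.exp ((occ d i a₀ : ℂ) * ((t : ℂ) * Complex.I))
      = Complex.exp ((occ d j a₀ : ℂ) * ((t : ℂ) * Complex.I)) := by
    have h3 : Complex.exp ((occ d i a₀ : ℂ) * ((t : ℂ) * Complex.I)) * O i j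
        = Complex.exp ((occ d j a₀ : ℂ) * ((t : ℂ) * Complex.I)) * O i j := by
      rw [h2, mul_comm]
    exact mul_right_cancel₀ hO h3
  rw [Complex.exp_eq_exp_iff_exists_int] at hexp
  obtain ⟨m, hm⟩ := hexp
  set mi : ℕ := occ d i a₀
  set mj : ℕ := occ d j a₀
  have hreal : (mi : ℝ) * t = (mj : ℝ) * t + m * (2 * Real.pi) := by
    have hc : (((mi : ℝ) * t : ℝ) : ℂ) * Complex.I
        = (((mj : ℝ) * t + m * (2 * Real.pi) : ℝ) : ℂ) * Complex.I := by
      push_cast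
      linear_combination hm
    have := mul_right_cancel₀ Complex.I_ne_zero hc
    exact_mod_cast this
  have hmi : (mi : ℝ) ≤ n := by exact_mod_cast occ_le i a₀
  have hmj : (mj : ℝ) ≤ n := by exact_mod_cast occ_le j a₀
  by_cases hm0 : m = 0
  · subst hm0
    simp only [Int.cast_zero, zero_mul, add_zero] at hreal
    have : (mi : ℝ) = mj := mul_right_cancel₀ (ne_of_gt ht) hreal
    exact ha₀ (by exact_mod_cast this)
  · have h0i : (0:ℝ) ≤ (mi:ℝ) := Nat.cast_nonneg mi
    have h0j : (0:ℝ) ≤ (mj:ℝ) := Nat.cast_nonneg mj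
    have h4 : |(mi : ℝ) - mj| ≤ n := abs_le.2 ⟨by linarith, by linarith⟩
    have habs : |((mi : ℝ) - mj) * t| ≤ n * t := by
      rw [abs_mul, abs_of_pos ht]
      exact mul_le_mul_of_nonneg_right h4 ht.le
    have heq : ((mi : ℝ) - mj) * t = m * (2 * Real.pi) := by linarith
    rw [heq] at habs
    have h5 : |(m:ℝ) * (2 * Real.pi)| = |(m:ℝ)| * (2 * Real.pi) := by
      rw [abs_mul, abs_of_pos (by positivity : (0:ℝ) < 2 * Real.pi)]
    have hk1 : (1:ℝ) ≤ |(m:ℝ)| := by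
      rw [← Int.cast_abs]
      exact_mod_cast Int.one_le_abs (by omega)
    have hnt : (n:ℝ) * t < Real.pi := by
      rw [ht_def, ← mul_div_assoc, div_lt_iff₀ (by positivity)]
      nlinarith [Real.pi_pos]
    rw [h5] at habs
    nlinarith [Real.pi_pos]


lemma mul_symProj_self {n d : ℕ} (O : Matrix (Fin n → Fin d) (Fin n → Fin d) ℂ)
    (h : symProj (Fin n) d * O * symProj (Fin n) d = O) :
    O * symProj (Fin n) d = O := by
  conv_lhs => rw [← h]
  rw [Matrix.mul_assoc (symProj (Fin n) d * O), symProj_idem_s14, h]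

lemma fact_sum_perm {n d : ℕ} (O : Matrix (Fin n → Fin d) (Fin n → Fin d) ℂ)
    (hO : O * symProj (Fin n) d = O) (i : Fin n → Fin d) :
    ((Nat.factorial n : ℂ)) * O i i
      = ∑ σ : Equiv.Perm (Fin n), O i (fun k => i (σ k)) := by
  have hN : ((Nat.factorial n : ℂ)) ≠ 0 := Nat.cast_ne_zero.2 (Nat.factorial_ne_zero _)
  have h : (O * symProj (Fin n) d) i i = O i i := by rw [hO]
  rw [Matrix.mul_apply] at h
  simp only [symProj, Matrix.smul_apply, Matrix.sum_apply, permMatrix, Matrix.of_apply,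
    smul_eq_mul, Fintype.card_fin, Finset.mul_sum, mul_ite, mul_one, mul_zero] at h
  rw [Finset.sum_comm] at h
  simp only [Finset.sum_ite_eq' Finset.univ, Finset.mem_univ, if_true] at h
  rw [Fintype.sum_equiv (Equiv.inv (Equiv.Perm (Fin n)))
    (fun σ => O i (fun k => i (σ⁻¹ k)) * ((Nat.factorial n : ℂ))⁻¹)
    (fun σ => O i (fun k => i (σ k)) * ((Nat.factorial n : ℂ))⁻¹)
    (fun σ => rfl)] at h
  rw [← Finset.sum_mul] at h
  field_simp at h
  rw [h]

lemma fiber_card {n d : ℕ} {i j : Fin n → Fin d} (h : occ d i = occ d j) :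
    (Finset.univ.filter fun σ : Equiv.Perm (Fin n) => (fun k => i (σ k)) = j).card
      = ∏ a, (occ d i a).factorial := by
  obtain ⟨σ₀, hσ₀⟩ := exists_perm_comp h
  have hcard : (Finset.univ.filter fun σ : Equiv.Perm (Fin n) => (fun k => i (σ k)) = j).card
      = (Finset.univ.filter fun τ : Equiv.Perm (Fin n) => i ∘ τ = i).card := by
    refine (Finset.card_bij (fun τ _ => τ * σ₀) ?_ ?_ ?_).symm
    · intro τ hτ
      have hτ' : i ∘ τ = i := (Finset.mem_filter.1 hτ).2
      simp only [Finset.mem_filter, Finset.mem_univ, true_and]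
      funext k
      show i (τ (σ₀ k)) = j k
      rw [show i (τ (σ₀ k)) = i (σ₀ k) from congrFun hτ' (σ₀ k)]
      exact congrFun hσ₀ k
    · intro τ _ τ' _ hτ
      exact mul_right_cancel hτ
    · intro σ hσ
      refine ⟨σ * σ₀⁻¹, ?_, by group⟩
      have hσ' : (fun k => i (σ k)) = j := (Finset.mem_filter.1 hσ).2
      simp only [Finset.mem_filter, Finset.mem_univ, true_and]
      funext m
      show i (σ (σ₀⁻¹ m)) = i m
      rw [congrFun hσ' (σ₀⁻¹ m)]
      have := congrFun hσ₀ (σ₀⁻¹ m)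
      simp only [Function.comp_apply, Equiv.Perm.coe_inv, Equiv.apply_symm_apply] at this
      exact this.symm
  rw [hcard]
  have := DomMulAct.stabilizer_card i
  rw [Fintype.card_subtype] at this
  rw [this]
  exact Finset.prod_congr rfl fun a _ => by rw [Fintype.card_subtype]; rfl

lemma row_class {n d : ℕ} (O : Matrix (Fin n → Fin d) (Fin n → Fin d) ℂ)
    (hO : O * symProj (Fin n) d = O) (i : Fin n → Fin d) :
    ∑ j ∈ Finset.univ.filter (fun j => occ d j = occ d i), O i j
      = ((Nat.multinomial Finset.univ (occ d i) : ℕ) : ℂ) * O i i := by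
  have key := fact_sum_perm O hO i
  rw [← Finset.sum_fiberwise_of_maps_to (g := fun σ : Equiv.Perm (Fin n) => fun k => i (σ k))
    (t := Finset.univ.filter (fun j => occ d j = occ d i))
    (fun σ _ => Finset.mem_filter.2 ⟨Finset.mem_univ _, occ_comp_perm i σ⟩)
    (fun σ => O i (fun k => i (σ k)))] at key
  have key2 : ((Nat.factorial n : ℂ)) * O i i
      = ∑ j ∈ Finset.univ.filter (fun j => occ d j = occ d i),
          ((∏ a, (occ d i a).factorial : ℕ) : ℂ) * O i j := by
    rw [key]
    refine Finset.sum_congr rfl fun j hj => ?_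
    have hj' : occ d j = occ d i := (Finset.mem_filter.1 hj).2
    rw [Finset.sum_congr rfl (fun σ hσ => by rw [(Finset.mem_filter.1 hσ).2]),
      Finset.sum_const, fiber_card hj'.symm, nsmul_eq_mul]
  have hspec : ((∏ a, (occ d i a).factorial : ℕ) : ℂ)
        * ((Nat.multinomial Finset.univ (occ d i) : ℕ) : ℂ)
      = (Nat.factorial n : ℂ) := by
    rw [← Nat.cast_mul, Nat.multinomial_spec, sum_occ]
  have hP : ((∏ a, (occ d i a).factorial : ℕ) : ℂ) ≠ 0 :=
    Nat.cast_ne_zero.2 (Finset.prod_pos (fun a _ => Nat.factorial_pos _)).ne'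
  apply mul_left_cancel₀ hP
  rw [← mul_assoc, hspec, key2, Finset.mul_sum]


lemma quad_form {n d : ℕ} (O : Matrix (Fin n → Fin d) (Fin n → Fin d) ℂ)
    (hO : O * symProj (Fin n) d = O)
    (hcomm : ∀ θ : Fin d → ℝ,
      Matrix.diagonal (fun i : Fin n → Fin d => ∏ k, Complex.exp ((θ (i k) : ℂ) * Complex.I)) * O =
        O * Matrix.diagonal fun i : Fin n → Fin d => ∏ k, Complex.exp ((θ (i k) : ℂ) * Complex.I))
    (v : Fin d → ℂ) :
    ∑ i : Fin n → Fin d,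
        star (∏ k, v (i k)) * (O.mulVec fun j : Fin n → Fin d => ∏ k, v (j k)) i
      = ∑ i : Fin n → Fin d, ((Nat.multinomial Finset.univ (occ d i) : ℕ) : ℂ) * O i i *
          ∏ k, ((Complex.normSq (v (i k)) : ℝ) : ℂ) := by
  simp only [Matrix.mulVec, dotProduct]
  refine Finset.sum_congr rfl fun i _ => ?_
  have hsplit : ∑ j : Fin n → Fin d, O i j * ∏ k, v (j k)
      = ∑ j ∈ Finset.univ.filter (fun j => occ d j = occ d i), O i j * ∏ k, v (j k) := by
    refine (Finset.sum_subset (Finset.filter_subset _ _) (fun j _ hj => ?_)).symm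
    have hne : occ d i ≠ occ d j := by
      intro hc
      exact hj (Finset.mem_filter.2 ⟨Finset.mem_univ _, hc.symm⟩)
    rw [offdiag_zero O hcomm hne, zero_mul]
  rw [hsplit,
    Finset.sum_congr rfl (fun j hj => by
      rw [prod_eq_of_occ_eq (Finset.mem_filter.1 hj).2 v]),
    ← Finset.sum_mul, row_class O hO i]
  rw [Finset.prod_congr rfl (fun k _ => (Complex.mul_conj (v (i k))).symm),
    Finset.prod_mul_distrib]
  rw [star_prod]
  simp only [Complex.star_def]
  ring

/-- for a self-adjoint diagonally symmetric `O` with tensor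
`W[O]_i = binom(n,γ(i))·⟨i|O|i⟩`, one has `⟨v^{⊗n}, O v^{⊗n}⟩ ≥ 0` for all `v ∈ ℂ^d` iff the
polynomial `p_{W[O]}(x) = ∑_i W[O]_i x_{i₁}⋯x_{i_n}` is non-negative on `ℝ₊^d`
(`W[O]` is copositive). -/
theorem stmt_14 (n d : ℕ) (O : Matrix (Fin n → Fin d) (Fin n → Fin d) ℂ)
    (hherm : O.IsHermitian) (hDS : IsDS (Fin n) d O) :
    (∀ v : Fin d → ℂ,
        0 ≤ ∑ i : Fin n → Fin d,
          star (∏ k, v (i k)) * (O.mulVec fun j : Fin n → Fin d => ∏ k, v (j k)) i) ↔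
      ∀ x : Fin d → ℝ, (∀ a, 0 ≤ x a) →
        0 ≤ ∑ i : Fin n → Fin d,
          ((Nat.multinomial Finset.univ (occ d i) : ℕ) : ℂ) * O i i *
            ∏ k, ((x (i k) : ℝ) : ℂ) := by
  obtain ⟨hproj, hcomm⟩ := hDS
  have hO : O * symProj (Fin n) d = O := mul_symProj_self O hproj
  constructor
  · intro h x hx
    have hv := h (fun a => (Real.sqrt (x a) : ℂ))
    rw [quad_form O hO hcomm (fun a => (Real.sqrt (x a) : ℂ))] at hv
    refine le_of_le_of_eq hv (Finset.sum_congr rfl fun i _ => ?_)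
    congr 1
    refine Finset.prod_congr rfl fun k _ => ?_
    show ((Complex.normSq ((Real.sqrt (x (i k)) : ℝ) : ℂ) : ℝ) : ℂ) = _
    rw [Complex.normSq_ofReal, Real.mul_self_sqrt (hx _)]
  · intro h v
    rw [quad_form O hO hcomm v]
    exact h (fun a => Complex.normSq (v a)) (fun a => Complex.normSq_nonneg _)
end

section
/- The Motzkin polynomial M(x,y,z) = x^4 y^2 + x^2 y^4 + z^6 − 3 x^2 y^2 z^2 is non-negative on all of ℝ^3 but is not a sum of squares of real polynomials. -/
open MvPolynomial

/-- weight of a monomial exponent -/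
def wt (w : Fin 3 → ℤ) (m : Fin 3 →₀ ℕ) : ℤ := ∑ i, w i * (m i : ℤ)

lemma wt_add (w : Fin 3 → ℤ) (a b : Fin 3 →₀ ℕ) : wt w (a + b) = wt w a + wt w b := by
  simp [wt, Finsupp.add_apply, mul_add, Finset.sum_add_distrib]

/-- exponent vector -/
noncomputable def ev (a b c : ℕ) : Fin 3 →₀ ℕ :=
  Finsupp.single 0 a + Finsupp.single 1 b + Finsupp.single 2 c

lemma ev_apply0 (a b c : ℕ) : ev a b c 0 = a := by simp [ev, Finsupp.single_apply]
lemma ev_apply1 (a b c : ℕ) : ev a b c 1 = b := by simp [ev, Finsupp.single_apply]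
lemma ev_apply2 (a b c : ℕ) : ev a b c 2 = c := by simp [ev, Finsupp.single_apply]

lemma eq_ev (m : Fin 3 →₀ ℕ) (a b c : ℕ) (h0 : m 0 = a) (h1 : m 1 = b) (h2 : m 2 = c) :
    m = ev a b c := by
  ext i
  fin_cases i
  · simpa [ev_apply0] using h0
  · simpa [ev_apply1] using h1
  · simpa [ev_apply2] using h2

lemma ev_inj {a b c a' b' c' : ℕ} (h : ev a b c = ev a' b' c') :
    a = a' ∧ b = b' ∧ c = c' :=
  ⟨by rw [← ev_apply0 a b c, h, ev_apply0],
   by rw [← ev_apply1 a b c, h, ev_apply1],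
   by rw [← ev_apply2 a b c, h, ev_apply2]⟩

lemma wt_ev (w : Fin 3 → ℤ) (a b c : ℕ) :
    wt w (ev a b c) = w 0 * a + w 1 * b + w 2 * c := by
  simp [wt, Fin.sum_univ_three, ev_apply0, ev_apply1, ev_apply2]

lemma hrep : (X 0 ^ 4 * X 1 ^ 2 + X 0 ^ 2 * X 1 ^ 4 + X 2 ^ 6
      - 3 * (X 0 ^ 2 * X 1 ^ 2 * X 2 ^ 2) : MvPolynomial (Fin 3) ℝ)
    = monomial (ev 4 2 0) 1 + monomial (ev 2 4 0) 1 + monomial (ev 0 0 6) 1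
      + monomial (ev 2 2 2) (-3) := by
  have h3 : (3 : MvPolynomial (Fin 3) ℝ) = C 3 := (map_ofNat C 3).symm
  simp only [ev, X_pow_eq_monomial, monomial_mul, mul_one, h3, C_mul_monomial,
    Finsupp.single_zero, add_zero, zero_add, map_neg]
  ring

/-- the max-monomial argument: a linear bound on the support of a sum of squares
halves to a bound on the supports of the summands. -/
lemma sos_weight {K : ℕ} (f : Fin K → MvPolynomial (Fin 3) ℝ) (w : Fin 3 → ℤ) (c : ℤ)
    (hM : ∀ m ∈ (∑ k, f k ^ 2).support, wt w m ≤ 2 * c) :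
    ∀ k, ∀ m ∈ (f k).support, wt w m ≤ c := by
  by_contra h
  push_neg at h
  obtain ⟨k0, m0, hm0, hc0⟩ := h
  set key : (Fin 3 →₀ ℕ) → ℤ ×ₗ Lex (Fin 3 →₀ ℕ) := fun m => toLex (wt w m, toLex m) with hkey
  set S : Finset (Fin 3 →₀ ℕ) := Finset.univ.biUnion (fun k => (f k).support) with hS
  have hSne : S.Nonempty := ⟨m0, by simp only [hS, Finset.mem_biUnion]; exact ⟨k0, Finset.mem_univ _, hm0⟩⟩
  obtain ⟨m, hmS, hmax⟩ := S.exists_max_image key hSne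
  have hWle : ∀ a ∈ S, wt w a ≤ wt w m := by
    intro a ha
    have h2 := hmax a ha
    rw [hkey, Prod.Lex.le_iff] at h2
    rcases h2 with h2 | ⟨h2, _⟩
    · exact le_of_lt h2
    · exact le_of_eq h2
  have hWm : c < wt w m := lt_of_lt_of_le hc0 (hWle m0 (by
    simp only [hS, Finset.mem_biUnion]; exact ⟨k0, Finset.mem_univ _, hm0⟩))
  have huniq : ∀ a b : Fin 3 →₀ ℕ, a ∈ S → b ∈ S → a + b = m + m → a = m ∧ b = m := by
    intro a b ha hb hab
    have hWa := hWle a ha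
    have hWb := hWle b hb
    have hsum : wt w a + wt w b = wt w m + wt w m := by rw [← wt_add, hab, wt_add]
    have hWa' : wt w a = wt w m := by omega
    have hla : toLex a ≤ toLex m := by
      have h2 := hmax a ha
      rw [hkey, Prod.Lex.le_iff] at h2
      rcases h2 with h2 | ⟨_, h2⟩
      · simp only [ofLex_toLex] at h2; omega
      · exact h2
    have hlb : toLex b ≤ toLex m := by
      have h2 := hmax b hb
      rw [hkey, Prod.Lex.le_iff] at h2
      rcases h2 with h2 | ⟨_, h2⟩
      · simp only [ofLex_toLex] at h2; omega
      · exact h2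
    have ham : a = m := by
      by_contra hne
      have hlt : toLex a < toLex m := lt_of_le_of_ne hla (fun h => hne (toLex.injective h))
      have hcon : toLex (a + b) < toLex (m + m) :=
        lt_of_lt_of_le (add_lt_add_left (α := Lex (Fin 3 →₀ ℕ)) hlt (toLex b))
          (add_le_add_right (α := Lex (Fin 3 →₀ ℕ)) hlb (toLex m))
      rw [hab] at hcon
      exact lt_irrefl _ hcon
    subst ham
    exact ⟨rfl, add_left_cancel hab⟩
  have hcoeff : ∀ k, coeff (m + m) (f k ^ 2) = (coeff m (f k))^2 := by
    intro k
    rw [sq, coeff_mul, sq]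
    apply Finset.sum_eq_single (m, m)
    · intro p hp hne
      rw [Finset.HasAntidiagonal.mem_antidiagonal] at hp
      by_contra hz
      have h1 : coeff p.1 (f k) ≠ 0 := fun h => hz (by rw [h, zero_mul])
      have h2 : coeff p.2 (f k) ≠ 0 := fun h => hz (by rw [h, mul_zero])
      have hp1 : p.1 ∈ S := by
        simp only [hS, Finset.mem_biUnion]
        exact ⟨k, Finset.mem_univ _, mem_support_iff.mpr h1⟩
      have hp2 : p.2 ∈ S := by
        simp only [hS, Finset.mem_biUnion]
        exact ⟨k, Finset.mem_univ _, mem_support_iff.mpr h2⟩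
      obtain ⟨e1, e2⟩ := huniq p.1 p.2 hp1 hp2 hp
      exact hne (Prod.ext e1 e2)
    · intro h
      rw [Finset.HasAntidiagonal.mem_antidiagonal] at h
      exact absurd rfl h
  have hco : coeff (m + m) (∑ k, f k ^ 2) = ∑ k, (coeff m (f k))^2 := by
    rw [coeff_sum]
    exact Finset.sum_congr rfl fun k _ => hcoeff k
  have hpos : 0 < ∑ k, (coeff m (f k))^2 := by
    obtain ⟨k, -, hk⟩ := Finset.mem_biUnion.mp (hS ▸ hmS)
    refine Finset.sum_pos' (fun j _ => sq_nonneg _) ⟨k, Finset.mem_univ _, ?_⟩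
    have hne : coeff m (f k) ≠ 0 := mem_support_iff.mp hk
    positivity
  have hmem : m + m ∈ (∑ k, f k ^ 2).support := by
    rw [mem_support_iff, hco]; exact ne_of_gt hpos
  have hfin := hM _ hmem
  rw [wt_add] at hfin
  omega

lemma coeff_sq_eq (f : MvPolynomial (Fin 3) ℝ) (m : Fin 3 →₀ ℕ)
    (h : ∀ a ∈ f.support, ∀ b ∈ f.support, a + b = m + m → a = m ∧ b = m) :
    coeff (m + m) (f ^ 2) = (coeff m f)^2 := by
  classical
  rw [sq, coeff_mul, sq]
  apply Finset.sum_eq_single (m, m)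
  · intro p hp hne
    rw [Finset.HasAntidiagonal.mem_antidiagonal] at hp
    by_contra hz
    have h1 : coeff p.1 f ≠ 0 := fun hh => hz (by rw [hh, zero_mul])
    have h2 : coeff p.2 f ≠ 0 := fun hh => hz (by rw [hh, mul_zero])
    obtain ⟨e1, e2⟩ := h p.1 (mem_support_iff.mpr h1) p.2 (mem_support_iff.mpr h2) hp
    exact hne (Prod.ext e1 e2)
  · intro hh
    rw [Finset.HasAntidiagonal.mem_antidiagonal] at hh
    exact absurd rfl hh

set_option maxHeartbeats 2000000 in
/-- the Motzkin polynomial `x⁴y² + x²y⁴ + z⁶ − 3x²y²z²` is non-negative on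
all of `ℝ³` but is not a sum of squares of real polynomials. -/
theorem stmt_15 :
    (∀ x : Fin 3 → ℝ, 0 ≤ MvPolynomial.eval x
        (X 0 ^ 4 * X 1 ^ 2 + X 0 ^ 2 * X 1 ^ 4 + X 2 ^ 6
          - 3 * (X 0 ^ 2 * X 1 ^ 2 * X 2 ^ 2) : MvPolynomial (Fin 3) ℝ)) ∧
      ¬ ∃ (K : ℕ) (f : Fin K → MvPolynomial (Fin 3) ℝ),
        (X 0 ^ 4 * X 1 ^ 2 + X 0 ^ 2 * X 1 ^ 4 + X 2 ^ 6
          - 3 * (X 0 ^ 2 * X 1 ^ 2 * X 2 ^ 2) : MvPolynomial (Fin 3) ℝ) = ∑ k, f k ^ 2 := by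
  constructor
  · intro x
    simp only [map_add, map_sub, map_mul, map_pow, eval_X, map_ofNat]
    set a := x 0
    set b := x 1
    set c := x 2
    have key : (a^2 + b^2 + c^2) * (a ^ 4 * b ^ 2 + a ^ 2 * b ^ 4 + c ^ 6 - 3 * (a ^ 2 * b ^ 2 * c ^ 2))
        = (a^2*b*c - b*c^3)^2 + (a*b^2*c - a*c^3)^2 + (a^2*b^2 - c^4)^2
          + (1/4) * (a*b^3 - a^3*b)^2 + (3/4) * (a*b^3 + a^3*b - 2*a*b*c^2)^2 := by
      ring
    rcases eq_or_lt_of_le (by positivity : (0:ℝ) ≤ a^2 + b^2 + c^2) with h | h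
    · have ha : a = 0 := by nlinarith [sq_nonneg a, sq_nonneg b, sq_nonneg c]
      have hb : b = 0 := by nlinarith [sq_nonneg a, sq_nonneg b, sq_nonneg c]
      have hc : c = 0 := by nlinarith [sq_nonneg a, sq_nonneg b, sq_nonneg c]
      simp [ha, hb, hc]
    · have hprod : 0 ≤ (a^2 + b^2 + c^2) * (a ^ 4 * b ^ 2 + a ^ 2 * b ^ 4 + c ^ 6 - 3 * (a ^ 2 * b ^ 2 * c ^ 2)) := by
        rw [key]
        positivity
      exact nonneg_of_mul_nonneg_right hprod h
  · rintro ⟨K, f, hf⟩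
    have hsupp : ∀ m ∈ (∑ k, f k ^ 2).support,
        m = ev 4 2 0 ∨ m = ev 2 4 0 ∨ m = ev 0 0 6 ∨ m = ev 2 2 2 := by
      intro m hm
      rw [← hf, hrep, mem_support_iff] at hm
      simp only [coeff_add, coeff_monomial] at hm
      by_contra hc
      push_neg at hc
      obtain ⟨n1, n2, n3, n4⟩ := hc
      rw [if_neg (fun h => n1 h.symm), if_neg (fun h => n2 h.symm),
        if_neg (fun h => n3 h.symm), if_neg (fun h => n4 h.symm)] at hm
      simp at hm
    have hb : ∀ (w : Fin 3 → ℤ) (c : ℤ),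
        wt w (ev 4 2 0) ≤ 2 * c → wt w (ev 2 4 0) ≤ 2 * c →
        wt w (ev 0 0 6) ≤ 2 * c → wt w (ev 2 2 2) ≤ 2 * c →
        ∀ k, ∀ m ∈ (f k).support, wt w m ≤ c := by
      intro w c h1 h2 h3 h4
      apply sos_weight
      intro m hm
      rcases hsupp m hm with h | h | h | h <;> subst h <;> assumption
    have hA : ∀ k, ∀ m ∈ (f k).support,
        (m 0 = 2 ∧ m 1 = 1 ∧ m 2 = 0) ∨ (m 0 = 1 ∧ m 1 = 2 ∧ m 2 = 0) ∨
        (m 0 = 1 ∧ m 1 = 1 ∧ m 2 = 1) ∨ (m 0 = 0 ∧ m 1 = 0 ∧ m 2 = 3) := by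
      intro k m hm
      have h1 := hb ![1,1,1] 3 (by norm_num [wt_ev, Matrix.cons_val_two, Matrix.tail_cons, Matrix.head_cons]) (by norm_num [wt_ev, Matrix.cons_val_two, Matrix.tail_cons, Matrix.head_cons])
        (by norm_num [wt_ev, Matrix.cons_val_two, Matrix.tail_cons, Matrix.head_cons]) (by norm_num [wt_ev, Matrix.cons_val_two, Matrix.tail_cons, Matrix.head_cons]) k m hm
      have h2 := hb ![-1,-1,-1] (-3) (by norm_num [wt_ev, Matrix.cons_val_two, Matrix.tail_cons, Matrix.head_cons]) (by norm_num [wt_ev, Matrix.cons_val_two, Matrix.tail_cons, Matrix.head_cons])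
        (by norm_num [wt_ev, Matrix.cons_val_two, Matrix.tail_cons, Matrix.head_cons]) (by norm_num [wt_ev, Matrix.cons_val_two, Matrix.tail_cons, Matrix.head_cons]) k m hm
      have h3 := hb ![1,0,0] 2 (by norm_num [wt_ev, Matrix.cons_val_two, Matrix.tail_cons, Matrix.head_cons]) (by norm_num [wt_ev, Matrix.cons_val_two, Matrix.tail_cons, Matrix.head_cons])
        (by norm_num [wt_ev, Matrix.cons_val_two, Matrix.tail_cons, Matrix.head_cons]) (by norm_num [wt_ev, Matrix.cons_val_two, Matrix.tail_cons, Matrix.head_cons]) k m hm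
      have h4 := hb ![0,1,0] 2 (by norm_num [wt_ev, Matrix.cons_val_two, Matrix.tail_cons, Matrix.head_cons]) (by norm_num [wt_ev, Matrix.cons_val_two, Matrix.tail_cons, Matrix.head_cons])
        (by norm_num [wt_ev, Matrix.cons_val_two, Matrix.tail_cons, Matrix.head_cons]) (by norm_num [wt_ev, Matrix.cons_val_two, Matrix.tail_cons, Matrix.head_cons]) k m hm
      have h5 := hb ![0,-4,-1] (-3) (by norm_num [wt_ev, Matrix.cons_val_two, Matrix.tail_cons, Matrix.head_cons]) (by norm_num [wt_ev, Matrix.cons_val_two, Matrix.tail_cons, Matrix.head_cons])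
        (by norm_num [wt_ev, Matrix.cons_val_two, Matrix.tail_cons, Matrix.head_cons]) (by norm_num [wt_ev, Matrix.cons_val_two, Matrix.tail_cons, Matrix.head_cons]) k m hm
      have h6 := hb ![-4,0,-1] (-3) (by norm_num [wt_ev, Matrix.cons_val_two, Matrix.tail_cons, Matrix.head_cons]) (by norm_num [wt_ev, Matrix.cons_val_two, Matrix.tail_cons, Matrix.head_cons])
        (by norm_num [wt_ev, Matrix.cons_val_two, Matrix.tail_cons, Matrix.head_cons]) (by norm_num [wt_ev, Matrix.cons_val_two, Matrix.tail_cons, Matrix.head_cons]) k m hm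
      simp only [wt, Fin.sum_univ_three, Matrix.cons_val_zero, Matrix.cons_val_one,
        Matrix.head_cons, Matrix.cons_val_two, Matrix.tail_cons] at h1 h2 h3 h4 h5 h6
      omega
    have e222 : ev 1 1 1 + ev 1 1 1 = ev 2 2 2 := by
      ext i
      fin_cases i <;> simp [Finsupp.add_apply, ev_apply0, ev_apply1, ev_apply2]
    have hsq : ∀ k, coeff (ev 2 2 2) (f k ^ 2) = (coeff (ev 1 1 1) (f k))^2 := by
      intro k
      rw [← e222]
      apply coeff_sq_eq
      intro a ha b hb hab
      have hA1 := hA k a ha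
      have hA2 := hA k b hb
      have hs0 : a 0 + b 0 = 2 := by
        have := congrArg (fun g : Fin 3 →₀ ℕ => g 0) hab
        simpa [Finsupp.add_apply, ev_apply0] using this
      have hs1 : a 1 + b 1 = 2 := by
        have := congrArg (fun g : Fin 3 →₀ ℕ => g 1) hab
        simpa [Finsupp.add_apply, ev_apply1] using this
      have hs2 : a 2 + b 2 = 2 := by
        have := congrArg (fun g : Fin 3 →₀ ℕ => g 2) hab
        simpa [Finsupp.add_apply, ev_apply2] using this
      refine ⟨eq_ev a 1 1 1 ?_ ?_ ?_, eq_ev b 1 1 1 ?_ ?_ ?_⟩ <;> omega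
    have hne1 : ev 4 2 0 ≠ ev 2 2 2 := fun h => by obtain ⟨h0, -, -⟩ := ev_inj h; omega
    have hne2 : ev 2 4 0 ≠ ev 2 2 2 := fun h => by obtain ⟨-, h1, -⟩ := ev_inj h; omega
    have hne3 : ev 0 0 6 ≠ ev 2 2 2 := fun h => by obtain ⟨h0, -, -⟩ := ev_inj h; omega
    have hcM : coeff (ev 2 2 2) (∑ k, f k ^ 2) = -3 := by
      rw [← hf, hrep]
      simp only [coeff_add, coeff_monomial, if_neg hne1, if_neg hne2, if_neg hne3, if_pos rfl]
      norm_num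
    have hsum : coeff (ev 2 2 2) (∑ k, f k ^ 2) = ∑ k, (coeff (ev 1 1 1) (f k))^2 := by
      rw [coeff_sum]
      exact Finset.sum_congr rfl fun k _ => hsq k
    have hnn : (0:ℝ) ≤ ∑ k, (coeff (ev 1 1 1) (f k))^2 :=
      Finset.sum_nonneg fun k _ => sq_nonneg _
    rw [hcM] at hsum
    linarith
end

section
/- Let α ∈ ℕ^d with |α| = n ≥ 2 have at least two non-zero entries, and let l ≠ m be two indices with α_l ≥ 1 and α_m ≥ 1. Define the 2×2 matrix Q with Q_{ab} = binom(n−2, α − e_a − e_b)/binom(n,α) · 1[α ≥ e_a + e_b] for a,b ∈ {l,m}, where e_a is the a-th standard basis vector. Then Q_{ll} Q_{mm} < Q_{lm}^2; in particular Q is not positive semidefinite. -/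
/-- The diagonal 2-body data of a pure Dicke state `|D_α⟩`:
`q α a b = binom(n−2, α − e_a − e_b)/binom(n, α)` when `α ≥ e_a + e_b` entrywise,
and `0` otherwise. -/
noncomputable def q {d : ℕ} (α : Fin d → ℕ) (a b : Fin d) : ℝ :=
  if ∀ j, (if j = a then 1 else 0) + (if j = b then 1 else 0) ≤ α j then
    (((Nat.multinomial Finset.univ
          fun j => α j - ((if j = a then 1 else 0) + (if j = b then 1 else 0))) : ℕ) : ℝ) /
      ((Nat.multinomial Finset.univ α : ℕ) : ℝ)
  else 0

open Nat

lemma q_nonneg {d : ℕ} (α : Fin d → ℕ) (a b : Fin d) : 0 ≤ q α a b := by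
  unfold q; split
  · positivity
  · exact le_refl 0

lemma q_symm {d : ℕ} (α : Fin d → ℕ) (a b : Fin d) : q α a b = q α b a := by
  unfold q
  have h : ∀ j, ((if j = b then 1 else 0) + (if j = a then 1 else 0) : ℕ)
      = (if j = a then 1 else 0) + (if j = b then 1 else 0) := fun j => add_comm _ _
  simp_rw [h]

lemma fact_sq_lt {a : ℕ} (ha : 2 ≤ a) :
    (a - 1)! * (a - 1)! < (a - 2)! * a ! := by
  obtain ⟨k, rfl⟩ : ∃ k, a = k + 2 := ⟨a - 2, by omega⟩
  simp only [Nat.add_sub_cancel, show k + 2 - 1 = k + 1 by omega, Nat.factorial_succ]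
  nlinarith [mul_pos (Nat.succ_pos k) (mul_pos k.factorial_pos k.factorial_pos)]


/-- for `α` with `|α| = n ≥ 2` and two distinct indices `l ≠ m` with
`α_l, α_m ≥ 1`, one has `Q_{ll}·Q_{mm} < Q_{lm}²`; in particular the corresponding `2 × 2`
matrix is not positive semidefinite. -/
theorem stmt_18 (d n : ℕ) (α : Fin d → ℕ) (hn : 2 ≤ n) (hα : ∑ j, α j = n)
    (l m : Fin d) (hlm : l ≠ m) (hl : 1 ≤ α l) (hm : 1 ≤ α m) :
    q α l l * q α m m < q α l m ^ 2 ∧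
      ¬ (!![q α l l, q α l m; q α m l, q α m m] : Matrix (Fin 2) (Fin 2) ℝ).PosSemidef := by
  have hNpos : (0:ℝ) < ((Nat.multinomial Finset.univ α : ℕ) : ℝ) := by
    exact_mod_cast Nat.multinomial_pos _ _
  -- condition for (l, m) always holds
  have hcond_lm : ∀ j, ((if j = l then 1 else 0) + (if j = m then 1 else 0) : ℕ) ≤ α j := by
    intro j
    by_cases h1 : j = l <;> by_cases h2 : j = m
    · exact absurd (h1 ▸ h2) hlm
    · subst h1; simp [h2]; omega
    · simpa [h2, Ne.symm hlm] using hm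
    · simp [h1, h2]
  have hqlm_pos : 0 < q α l m := by
    unfold q
    rw [if_pos hcond_lm]
    apply div_pos _ hNpos
    exact_mod_cast Nat.multinomial_pos _ _
  have main : q α l l * q α m m < q α l m ^ 2 := by
    by_cases ha : 2 ≤ α l
    case neg =>
      have : q α l l = 0 := by
        unfold q
        rw [if_neg]
        push_neg
        exact ⟨l, by simp; omega⟩
      rw [this, zero_mul]
      positivity
    by_cases hb : 2 ≤ α m
    case neg =>
      have : q α m m = 0 := by
        unfold q
        rw [if_neg]
        push_neg
        exact ⟨m, by simp; omega⟩
      rw [this, mul_zero]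
      positivity
    -- main case: both ≥ 2
    have hcond_ll : ∀ j, ((if j = l then 1 else 0) + (if j = l then 1 else 0) : ℕ) ≤ α j := by
      intro j; by_cases h1 : j = l
      · subst h1; simpa using ha
      · simp [h1]
    have hcond_mm : ∀ j, ((if j = m then 1 else 0) + (if j = m then 1 else 0) : ℕ) ≤ α j := by
      intro j; by_cases h1 : j = m
      · subst h1; simpa using hb
      · simp [h1]
    set fll : Fin d → ℕ := fun j => α j - ((if j = l then 1 else 0) + (if j = l then 1 else 0)) with hfll
    set fmm : Fin d → ℕ := fun j => α j - ((if j = m then 1 else 0) + (if j = m then 1 else 0)) with hfmm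
    set flm : Fin d → ℕ := fun j => α j - ((if j = l then 1 else 0) + (if j = m then 1 else 0)) with hflm
    set Mll := Nat.multinomial Finset.univ fll with hMll
    set Mmm := Nat.multinomial Finset.univ fmm with hMmm
    set Mlm := Nat.multinomial Finset.univ flm with hMlm
    -- the nat inequality
    have key : Mll * Mmm < Mlm * Mlm := by
      classical
      set S := ((Finset.univ : Finset (Fin d)).erase l).erase m with hS
      have hmS : m ∈ (Finset.univ : Finset (Fin d)).erase l :=
        Finset.mem_erase.mpr ⟨fun h => hlm h.symm, Finset.mem_univ m⟩
      have hdecomp : ∀ g : Fin d → ℕ, ∏ j, (g j)! = (g l)! * ((g m)! * ∏ j ∈ S, (g j)!) := by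
        intro g
        rw [← Finset.mul_prod_erase _ _ (Finset.mem_univ l), ← Finset.mul_prod_erase _ _ hmS]
      have hSne : ∀ j ∈ S, j ≠ l ∧ j ≠ m := by
        intro j hj
        rw [hS, Finset.mem_erase, Finset.mem_erase] at hj
        exact ⟨hj.2.1, hj.1⟩
      set R := ∏ j ∈ S, (α j)! with hR
      have hRpos : 0 < R := Finset.prod_pos fun j _ => Nat.factorial_pos _
      have hRll : ∏ j ∈ S, (fll j)! = R :=
        Finset.prod_congr rfl fun j hj => by simp [hfll, (hSne j hj).1]
      have hRmm : ∏ j ∈ S, (fmm j)! = R :=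
        Finset.prod_congr rfl fun j hj => by simp [hfmm, (hSne j hj).2]
      have hRlm : ∏ j ∈ S, (flm j)! = R :=
        Finset.prod_congr rfl fun j hj => by simp [hflm, (hSne j hj).1, (hSne j hj).2]
      set Pll := (α l - 2)! * ((α m)! * R) with hPlldef
      set Pmm := (α l)! * ((α m - 2)! * R) with hPmmdef
      set Plm := (α l - 1)! * ((α m - 1)! * R) with hPlmdef
      have hPll : ∏ j, (fll j)! = Pll := by
        rw [hdecomp fll, hRll, hPlldef]
        congr 2
        · simp [hfll]
        · simp [hfll, Ne.symm hlm]
      have hPmm : ∏ j, (fmm j)! = Pmm := by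
        rw [hdecomp fmm, hRmm, hPmmdef]
        congr 2
        · simp [hfmm, hlm]
        · simp [hfmm]
      have hPlm : ∏ j, (flm j)! = Plm := by
        rw [hdecomp flm, hRlm, hPlmdef]
        congr 2
        · simp [hflm, hlm]
        · simp [hflm, Ne.symm hlm]
      -- the sums
      have hsum2 : ∀ a b : Fin d,
          ∑ j, ((if j = a then 1 else 0) + (if j = b then 1 else 0)) = 2 := by
        intro a b
        simp [Finset.sum_add_distrib]
      have hsll : ∑ j, fll j = n - 2 := by
        rw [hfll, Finset.sum_tsub_distrib _ fun j _ => hcond_ll j, hα, hsum2]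
      have hsmm : ∑ j, fmm j = n - 2 := by
        rw [hfmm, Finset.sum_tsub_distrib _ fun j _ => hcond_mm j, hα, hsum2]
      have hslm : ∑ j, flm j = n - 2 := by
        rw [hflm, Finset.sum_tsub_distrib _ fun j _ => hcond_lm j, hα, hsum2]
      set K := (n - 2)! with hK
      have hKpos : 0 < K := Nat.factorial_pos _
      have specll : Pll * Mll = K := by
        have := Nat.multinomial_spec Finset.univ fll
        rwa [hsll, hPll] at this
      have specmm : Pmm * Mmm = K := by
        have := Nat.multinomial_spec Finset.univ fmm
        rwa [hsmm, hPmm] at this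
      have speclm : Plm * Mlm = K := by
        have := Nat.multinomial_spec Finset.univ flm
        rwa [hslm, hPlm] at this
      have hfa := fact_sq_lt ha
      have hfb := fact_sq_lt hb
      have hP : Plm * Plm < Pll * Pmm := by
        calc Plm * Plm
            = ((α l - 1)! * (α l - 1)!) * (((α m - 1)! * (α m - 1)!) * (R * R)) := by
              rw [hPlmdef]; ring
          _ < ((α l - 2)! * (α l)!) * (((α m - 2)! * (α m)!) * (R * R)) := by
              exact mul_lt_mul'' hfa
                (mul_lt_mul_of_pos_right hfb (Nat.mul_pos hRpos hRpos))
                (Nat.zero_le _) (Nat.zero_le _)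
          _ = Pll * Pmm := by rw [hPlldef, hPmmdef]; ring
      have hlt : (Mll * Mmm) * (Pll * Pmm * (Plm * Plm)) <
          (Mlm * Mlm) * (Pll * Pmm * (Plm * Plm)) := by
        have e1 : (Mll * Mmm) * (Pll * Pmm * (Plm * Plm))
            = (Pll * Mll) * (Pmm * Mmm) * (Plm * Plm) := by ring
        have e2 : (Mlm * Mlm) * (Pll * Pmm * (Plm * Plm))
            = (Plm * Mlm) * (Plm * Mlm) * (Pll * Pmm) := by ring
        rw [e1, e2, specll, specmm, speclm]
        exact mul_lt_mul_of_pos_left hP (Nat.mul_pos hKpos hKpos)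
      exact lt_of_mul_lt_mul_right hlt (Nat.zero_le _)
    have hql : q α l l = (Mll : ℝ) / ((Nat.multinomial Finset.univ α : ℕ) : ℝ) := by
      unfold q; rw [if_pos hcond_ll]
    have hqm : q α m m = (Mmm : ℝ) / ((Nat.multinomial Finset.univ α : ℕ) : ℝ) := by
      unfold q; rw [if_pos hcond_mm]
    have hqlm : q α l m = (Mlm : ℝ) / ((Nat.multinomial Finset.univ α : ℕ) : ℝ) := by
      unfold q; rw [if_pos hcond_lm]
    rw [hql, hqm, hqlm, _root_.div_mul_div_comm, div_pow, sq, div_lt_div_iff₀ (by positivity) (by positivity)]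
    have hcast : ((Mll : ℝ) * Mmm) < (Mlm : ℝ) * Mlm := by exact_mod_cast key
    nlinarith [mul_lt_mul_of_pos_right hcast (mul_pos hNpos hNpos)]
  refine ⟨main, fun hpsd => ?_⟩
  have hsym : q α m l = q α l m := q_symm α m l
  have hll := q_nonneg α l l
  have hmm := q_nonneg α m m
  by_cases h0 : q α m m = 0
  · have := hpsd.dotProduct_mulVec_nonneg ![2 * q α l m, -(q α l l + 1)]
    simp [dotProduct, Matrix.mulVec, Fin.sum_univ_two, hsym] at this
    rw [h0] at this
    nlinarith [mul_pos hqlm_pos hqlm_pos]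
  · have hmmpos : 0 < q α m m := lt_of_le_of_ne hmm (Ne.symm h0)
    have := hpsd.dotProduct_mulVec_nonneg ![q α m m, -(q α l m)]
    simp [dotProduct, Matrix.mulVec, Fin.sum_univ_two, hsym] at this
    nlinarith [mul_pos hmmpos (sub_pos.mpr main)]
end
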